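/- arXiv:2104.15138 — 5 statements merged into one kernel-verified Lean document; each statement's English description precedes it below -/
import Mathlib

section
/- Let A be an n×n column-stochastic matrix with all entries strictly positive. Then the system A ρ = ρ, ρ · 𝟏 = 1 has a unique solution ρ, and this ρ has all entries strictly positive. -/
open Matrix Finset

lemma stmt0_key (n : ℕ) (A : Matrix (Fin n) (Fin n) ℝ)
    (hpos : ∀ i j, 0 < A i j)
    (hcol : ∀ j, ∑ i, A i j = 1)
    (v : Fin n → ℝ) (hv : A.mulVec v = v) (hv0 : v ≠ 0) :
    (∀ i, 0 < v i) ∨ (∀ i, v i < 0) := by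
  set w : Fin n → ℝ := fun i => |v i| with hw
  have hme : ∀ (u : Fin n → ℝ) (i), A.mulVec u i = ∑ j, A i j * u j := by
    intro u i; rfl
  have hle : ∀ i, w i ≤ A.mulVec w i := by
    intro i
    have h1 : A.mulVec v i = v i := congrFun hv i
    calc w i = |A.mulVec v i| := by rw [h1]
      _ = |∑ j, A i j * v j| := by rw [hme]
      _ ≤ ∑ j, |A i j * v j| := Finset.abs_sum_le_sum_abs _ _
      _ = ∑ j, A i j * w j := by
          refine Finset.sum_congr rfl fun j _ => ?_
          rw [abs_mul, abs_of_pos (hpos i j)]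
      _ = A.mulVec w i := (hme w i).symm
  have hsum : ∑ i, A.mulVec w i = ∑ i, w i := by
    simp only [hme]
    rw [Finset.sum_comm]
    refine Finset.sum_congr rfl fun j _ => ?_
    rw [← Finset.sum_mul, hcol j, one_mul]
  have heq : ∀ i, A.mulVec w i = w i := by
    by_contra h
    push_neg at h
    obtain ⟨i, hi⟩ := h
    have hlt : w i < A.mulVec w i := lt_of_le_of_ne (hle i) (Ne.symm hi)
    have : ∑ i, w i < ∑ i, A.mulVec w i :=
      Finset.sum_lt_sum (fun i _ => hle i) ⟨i, Finset.mem_univ i, hlt⟩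
    linarith
  obtain ⟨j0, hj0⟩ : ∃ j, v j ≠ 0 := Function.ne_iff.mp hv0
  have hwj0 : 0 < w j0 := abs_pos.mpr hj0
  have hwpos : ∀ i, 0 < w i := by
    intro i
    rw [← heq i, hme]
    exact Finset.sum_pos' (fun j _ => mul_nonneg (hpos i j).le (abs_nonneg _))
      ⟨j0, Finset.mem_univ _, mul_pos (hpos i j0) hwj0⟩
  by_cases hp : ∀ i, 0 < v i
  · exact Or.inl hp
  · push_neg at hp
    obtain ⟨k, hk⟩ := hp
    have hkne : v k ≠ 0 := fun h => (hwpos k).ne' (by simp [hw, h])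
    have hkneg : v k < 0 := lt_of_le_of_ne hk hkne
    right
    intro i
    by_contra hin
    push_neg at hin
    have hine : v i ≠ 0 := fun h => (hwpos i).ne' (by simp [hw, h])
    have hipos : 0 < v i := lt_of_le_of_ne hin (Ne.symm hine)
    have h1 : (∑ j, A i j * v j) < ∑ j, A i j * w j := by
      refine Finset.sum_lt_sum (fun j _ => ?_) ⟨k, Finset.mem_univ _, ?_⟩
      · exact mul_le_mul_of_nonneg_left (le_abs_self _) (hpos i j).le
      · have hvk : v k < w k := by
          have : w k = -v k := by rw [hw]; exact abs_of_neg hkneg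
          linarith
        exact mul_lt_mul_of_pos_left hvk (hpos i k)
    have h2 : (∑ j, A i j * v j) = v i := by rw [← hme]; exact congrFun hv i
    have h3 : (∑ j, A i j * w j) = w i := by rw [← hme]; exact heq i
    have h4 : v i < w i := by rw [← h2, ← h3]; exact h1
    have : w i = v i := by rw [hw]; exact abs_of_pos hipos
    linarith

/-- If `A` is an `n × n` column-stochastic matrix with all entries
strictly positive, then the system `A ρ = ρ`, `ρ · 𝟏 = 1` has a unique solution `ρ`,
and this solution has all entries strictly positive. -/
theorem stmt0 (n : ℕ) (hn : 0 < n) (A : Matrix (Fin n) (Fin n) ℝ)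
    (hpos : ∀ i j, 0 < A i j)
    (hcol : ∀ j, ∑ i, A i j = 1) :
    (∃! ρ : Fin n → ℝ, A.mulVec ρ = ρ ∧ ∑ i, ρ i = 1) ∧
    (∀ ρ : Fin n → ℝ, A.mulVec ρ = ρ → ∑ i, ρ i = 1 → ∀ i, 0 < ρ i) := by
  have hne : (Finset.univ : Finset (Fin n)).Nonempty := ⟨⟨0, hn⟩, Finset.mem_univ _⟩
  -- positivity of any normalized fixed vector
  have hposρ : ∀ ρ : Fin n → ℝ, A.mulVec ρ = ρ → ∑ i, ρ i = 1 → ∀ i, 0 < ρ i := by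
    intro ρ hfix hsum i
    have hρ0 : ρ ≠ 0 := by
      intro h
      rw [h] at hsum
      simp at hsum
    rcases stmt0_key n A hpos hcol ρ hfix hρ0 with h | h
    · exact h i
    · exfalso
      have : ∑ i, ρ i < 0 :=
        Finset.sum_neg (fun i _ => h i) hne
      linarith
  -- existence of a nonzero fixed vector
  have hdetT : ((A - 1)ᵀ).det = 0 := by
    rw [← Matrix.exists_mulVec_eq_zero_iff]
    refine ⟨fun _ => 1, ?_, ?_⟩
    · intro h
      have := congrFun h ⟨0, hn⟩
      simp at this
    · funext i
      rw [Matrix.transpose_sub, Matrix.transpose_one]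
      simp only [Matrix.sub_mulVec, Matrix.one_mulVec, Pi.sub_apply]
      have : Aᵀ.mulVec (fun _ => 1) i = ∑ j, A j i := by
        simp [Matrix.mulVec, dotProduct, Matrix.transpose_apply]
      rw [this, hcol i]
      simp
  have hdet : (A - 1).det = 0 := by
    rw [← Matrix.det_transpose]; exact hdetT
  obtain ⟨v, hv0, hvz⟩ := (Matrix.exists_mulVec_eq_zero_iff).mpr hdet
  have hfixv : A.mulVec v = v := by
    have := hvz
    rw [Matrix.sub_mulVec, Matrix.one_mulVec, sub_eq_zero] at this
    exact this
  have hsign := stmt0_key n A hpos hcol v hfixv hv0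
  set s : ℝ := ∑ i, v i with hs
  have hsne : s ≠ 0 := by
    rcases hsign with h | h
    · exact (Finset.sum_pos (fun i _ => h i) hne).ne'
    · exact (Finset.sum_neg (fun i _ => h i) hne).ne
  set ρ : Fin n → ℝ := s⁻¹ • v with hρ
  have hfixρ : A.mulVec ρ = ρ := by
    rw [hρ, Matrix.mulVec_smul, hfixv]
  have hsumρ : ∑ i, ρ i = 1 := by
    rw [hρ]
    simp only [Pi.smul_apply, smul_eq_mul]
    rw [← Finset.mul_sum, ← hs, inv_mul_cancel₀ hsne]
  refine ⟨⟨ρ, ⟨hfixρ, hsumρ⟩, ?_⟩, hposρ⟩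
  rintro σ ⟨hfixσ, hsumσ⟩
  by_contra hne'
  have hδ0 : σ - ρ ≠ 0 := sub_ne_zero.mpr hne'
  have hfixδ : A.mulVec (σ - ρ) = σ - ρ := by
    rw [Matrix.mulVec_sub, hfixσ, hfixρ]
  have hsumδ : ∑ i, (σ - ρ) i = 0 := by
    simp only [Pi.sub_apply]
    rw [Finset.sum_sub_distrib, hsumσ, hsumρ, sub_self]
  rcases stmt0_key n A hpos hcol (σ - ρ) hfixδ hδ0 with h | h
  · have := Finset.sum_pos (fun i _ => h i) hne
    linarith
  · have := Finset.sum_neg (fun i _ => h i) hne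
    linarith
end

section
/- Let A(θ) be a C¹ matrix-valued function on an open set Θ ⊆ ℝᵐ such that A(θ) is column-stochastic with strictly positive entries for every θ ∈ Θ. Then for each θ the system A(θ)ρ = ρ, ρ·𝟏 = 1 has a unique solution ρ(θ); the map θ ↦ ρ(θ) is continuously differentiable; and for each coordinate k the partial derivative ζ_k(θ) = ∂_{θ_k} ρ(θ) is the unique solution of (A(θ) − I) ζ_k = −(∂_{θ_k} A(θ)) ρ(θ) with ζ_k · 𝟏 = 0. -/
open Matrix Finset

attribute [local instance] Matrix.normedAddCommGroup Matrix.normedSpace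

private lemma stmt3_ker {n : ℕ} (M : Matrix (Fin n) (Fin n) ℝ)
    (hpos : ∀ i j, 0 < M i j) (hcol : ∀ j, ∑ i, M i j = 1)
    (x : Fin n → ℝ) (hx : M *ᵥ x = x) (hs : ∑ i, x i = 0) : x = 0 := by
  by_contra hne
  have hker : ∃ p, x p ≠ 0 := by
    by_contra h
    push_neg at h
    exact hne (funext fun i => h i)
  obtain ⟨p₀, hp₀⟩ := hker
  -- there is a positive and a negative coordinate
  have hexp : ∃ p, 0 < x p := by
    by_contra h
    push_neg at h
    have : ∀ i ∈ Finset.univ, x i = 0 :=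
      (Finset.sum_eq_zero_iff_of_nonpos (fun i _ => h i)).1 hs
    exact hp₀ (this p₀ (Finset.mem_univ _))
  have hexq : ∃ q, x q < 0 := by
    by_contra h
    push_neg at h
    have : ∀ i ∈ Finset.univ, x i = 0 :=
      (Finset.sum_eq_zero_iff_of_nonneg (fun i _ => h i)).1 hs
    exact hp₀ (this p₀ (Finset.mem_univ _))
  obtain ⟨p, hp⟩ := hexp
  obtain ⟨q, hq⟩ := hexq
  have key : ∀ i, |x i| < ∑ j, M i j * |x j| := by
    intro i
    have hxi : x i = ∑ j, M i j * x j := by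
      have := congrFun hx i
      simp only [Matrix.mulVec, dotProduct] at this
      exact this.symm
    rw [abs_lt]
    constructor
    · have h1 : ∑ j, M i j * (-x j) < ∑ j, M i j * |x j| := by
        refine Finset.sum_lt_sum (fun j _ => ?_) ⟨p, Finset.mem_univ _, ?_⟩
        · exact mul_le_mul_of_nonneg_left (neg_le_abs (x j)) (hpos i j).le
        · exact mul_lt_mul_of_pos_left (by rw [abs_of_pos hp]; linarith) (hpos i p)
      have : -(x i) = ∑ j, M i j * (-x j) := by
        rw [hxi, ← Finset.sum_neg_distrib]
        exact Finset.sum_congr rfl fun j _ => by ring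
      linarith
    · have h1 : ∑ j, M i j * x j < ∑ j, M i j * |x j| := by
        refine Finset.sum_lt_sum (fun j _ => ?_) ⟨q, Finset.mem_univ _, ?_⟩
        · exact mul_le_mul_of_nonneg_left (le_abs_self (x j)) (hpos i j).le
        · exact mul_lt_mul_of_pos_left (by rw [abs_of_neg hq]; linarith) (hpos i q)
      linarith [hxi]
  have hlt : ∑ i, |x i| < ∑ i, ∑ j, M i j * |x j| :=
    Finset.sum_lt_sum_of_nonempty ⟨p, Finset.mem_univ _⟩ (fun i _ => key i)
  rw [Finset.sum_comm] at hlt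
  have : ∑ j, ∑ i, M i j * |x j| = ∑ j, |x j| := by
    refine Finset.sum_congr rfl fun j _ => ?_
    rw [← Finset.sum_mul, hcol j, one_mul]
  rw [this] at hlt
  exact lt_irrefl _ hlt

private lemma stmt3_prodCD {p : ℕ} {Θ : Set (Fin p → ℝ)} {α : Type*} (s : Finset α)
    (f : α → (Fin p → ℝ) → ℝ) (h : ∀ a ∈ s, ContDiffOn ℝ 1 (f a) Θ) :
    ContDiffOn ℝ 1 (fun θ => ∏ a ∈ s, f a θ) Θ := by
  classical
  induction s using Finset.induction_on with
  | empty => simpa using contDiffOn_const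
  | insert a s ha ih =>
      simp only [Finset.prod_insert ha]
      exact (h _ (Finset.mem_insert_self _ _)).mul
        (ih fun a haa => h a (Finset.mem_insert_of_mem haa))

private lemma stmt3_detCD {p n : ℕ} {Θ : Set (Fin p → ℝ)}
    (f : (Fin p → ℝ) → Matrix (Fin n) (Fin n) ℝ)
    (h : ∀ i j, ContDiffOn ℝ 1 (fun θ => f θ i j) Θ) :
    ContDiffOn ℝ 1 (fun θ => (f θ).det) Θ := by
  simp only [Matrix.det_apply, Units.smul_def, zsmul_eq_mul]
  exact ContDiffOn.sum fun σ _ =>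
    contDiffOn_const.mul (stmt3_prodCD Finset.univ _ (fun i _ => h (σ i) i))

private lemma stmt3_entryCD {p n : ℕ} {Θ : Set (Fin p → ℝ)}
    (f : (Fin p → ℝ) → Matrix (Fin n) (Fin n) ℝ) (hf : ContDiffOn ℝ 1 f Θ) (i j : Fin n) :
    ContDiffOn ℝ 1 (fun θ => f θ i j) Θ := by
  exact (ContinuousLinearMap.proj j).contDiff.comp_contDiffOn
    ((ContinuousLinearMap.proj i).contDiff.comp_contDiffOn hf)
/-- Let `A(θ)` be a `C¹` matrix-valued function on an open set
`Θ ⊆ ℝᵐ` such that `A(θ)` is column-stochastic with strictly positive entries for all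
`θ ∈ Θ`.  Then for each `θ ∈ Θ` the system `A(θ)ρ = ρ`, `ρ·𝟏 = 1` has a unique solution
`ρ(θ)`; the map `θ ↦ ρ(θ)` is continuously differentiable on `Θ`; and for each `k` the
partial derivative `ζ_k(θ) = ∂_{θ_k} ρ(θ)` is the unique solution of
`(A(θ) − I) ζ_k = −(∂_{θ_k} A(θ)) ρ(θ)`, `ζ_k · 𝟏 = 0`. -/
theorem stmt3 (n m : ℕ) (hn : 0 < n)
    (Θ : Set (Fin m → ℝ)) (hΘ : IsOpen Θ)
    (A : (Fin m → ℝ) → Matrix (Fin n) (Fin n) ℝ)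
    (hA : ContDiffOn ℝ 1 A Θ)
    (hpos : ∀ θ ∈ Θ, ∀ i j, 0 < A θ i j)
    (hcol : ∀ θ ∈ Θ, ∀ j, ∑ i, A θ i j = 1) :
    ∃ ρ : (Fin m → ℝ) → (Fin n → ℝ),
      (∀ θ ∈ Θ,
        ((A θ).mulVec (ρ θ) = ρ θ ∧ ∑ i, ρ θ i = 1) ∧
        (∀ σ : Fin n → ℝ, (A θ).mulVec σ = σ → ∑ i, σ i = 1 → σ = ρ θ)) ∧
      ContDiffOn ℝ 1 ρ Θ ∧
      (∀ θ ∈ Θ, ∀ k : Fin m,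
        ((A θ - 1).mulVec (fderivWithin ℝ ρ Θ θ (Pi.single k 1)) =
            -((fderivWithin ℝ A Θ θ (Pi.single k 1)).mulVec (ρ θ)) ∧
          ∑ i, fderivWithin ℝ ρ Θ θ (Pi.single k 1) i = 0) ∧
        (∀ ζ : Fin n → ℝ,
          (A θ - 1).mulVec ζ = -((fderivWithin ℝ A Θ θ (Pi.single k 1)).mulVec (ρ θ)) →
          ∑ i, ζ i = 0 → ζ = fderivWithin ℝ ρ Θ θ (Pi.single k 1))) := by
  classical
  have hn' : (n : ℝ) ≠ 0 := Nat.cast_ne_zero.2 hn.ne'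
  set J : Matrix (Fin n) (Fin n) ℝ := Matrix.of (fun _ _ => (1:ℝ)) with hJ
  set B : (Fin m → ℝ) → Matrix (Fin n) (Fin n) ℝ := fun θ => A θ + (J - 1) with hBdef
  have hBmul : ∀ θ (x : Fin n → ℝ) (i : Fin n),
      (B θ *ᵥ x) i = (A θ *ᵥ x) i + (∑ j, x j) - x i := by
    intro θ x i
    have hJx : (J *ᵥ x) i = ∑ j, x j := by
      simp [hJ, Matrix.mulVec, dotProduct]
    simp only [hBdef, Matrix.add_mulVec, Matrix.sub_mulVec, Matrix.one_mulVec,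
      Pi.add_apply, Pi.sub_apply, hJx]
    ring
  have hsumA : ∀ θ ∈ Θ, ∀ x : Fin n → ℝ, ∑ i, (A θ *ᵥ x) i = ∑ j, x j := by
    intro θ hθ x
    simp only [Matrix.mulVec, dotProduct]
    rw [Finset.sum_comm]
    exact Finset.sum_congr rfl fun j _ => by rw [← Finset.sum_mul, hcol θ hθ j, one_mul]
  have hsumB : ∀ θ ∈ Θ, ∀ x : Fin n → ℝ, ∑ i, (B θ *ᵥ x) i = n * ∑ j, x j := by
    intro θ hθ x
    calc ∑ i, (B θ *ᵥ x) i = ∑ i, ((A θ *ᵥ x) i + (∑ j, x j) - x i) :=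
          Finset.sum_congr rfl fun i _ => hBmul θ x i
      _ = (∑ i, (A θ *ᵥ x) i) + (n * ∑ j, x j) - ∑ i, x i := by
          rw [Finset.sum_sub_distrib, Finset.sum_add_distrib, Finset.sum_const,
            Finset.card_univ, Fintype.card_fin, nsmul_eq_mul]
      _ = n * ∑ j, x j := by rw [hsumA θ hθ x]; ring
  have hBker : ∀ θ ∈ Θ, ∀ x : Fin n → ℝ, B θ *ᵥ x = 0 → x = 0 := by
    intro θ hθ x hx0
    have hsx : ∑ i, x i = 0 := by
      have h0 : (0:ℝ) = n * ∑ j, x j := by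
        rw [← hsumB θ hθ x, hx0]; simp
      rcases mul_eq_zero.mp h0.symm with h | h
      · exact absurd h hn'
      · exact h
    have hAx : A θ *ᵥ x = x := by
      funext i
      have h := congrFun hx0 i
      rw [hBmul θ x i, hsx] at h
      simp only [Pi.zero_apply] at h
      linarith
    exact stmt3_ker (A θ) (hpos θ hθ) (hcol θ hθ) x hAx hsx
  have hdet : ∀ θ ∈ Θ, (B θ).det ≠ 0 := by
    intro θ hθ h0
    obtain ⟨v, hv, hv0⟩ := (Matrix.exists_mulVec_eq_zero_iff).2 h0
    exact hv (hBker θ hθ v hv0)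
  set ρ : (Fin m → ℝ) → (Fin n → ℝ) :=
    fun θ => ((B θ).det)⁻¹ • (B θ).cramer (fun _ => 1) with hρdef
  have hBρ : ∀ θ ∈ Θ, B θ *ᵥ ρ θ = fun _ => (1:ℝ) := by
    intro θ hθ
    show B θ *ᵥ (((B θ).det)⁻¹ • (B θ).cramer (fun _ => 1)) = fun _ => (1:ℝ)
    rw [Matrix.mulVec_smul, Matrix.mulVec_cramer, smul_smul,
      inv_mul_cancel₀ (hdet θ hθ), one_smul]
  have hρsum : ∀ θ ∈ Θ, ∑ i, ρ θ i = 1 := by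
    intro θ hθ
    have h1 : ∑ i, (B θ *ᵥ ρ θ) i = n := by rw [hBρ θ hθ]; simp
    rw [hsumB θ hθ] at h1
    have := mul_left_cancel₀ hn' (h1.trans (mul_one (n:ℝ)).symm)
    exact this
  have hρfix : ∀ θ ∈ Θ, A θ *ᵥ ρ θ = ρ θ := by
    intro θ hθ
    funext i
    have h1 := congrFun (hBρ θ hθ) i
    rw [hBmul θ (ρ θ) i, hρsum θ hθ] at h1
    linarith
  have huniq : ∀ θ ∈ Θ, ∀ σ : Fin n → ℝ, A θ *ᵥ σ = σ → ∑ i, σ i = 1 → σ = ρ θ := by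
    intro θ hθ σ h1 h2
    have hBσ : B θ *ᵥ σ = fun _ => (1:ℝ) := by
      funext i
      rw [hBmul θ σ i, h2, congrFun h1 i]
      ring
    have h0 : B θ *ᵥ (σ - ρ θ) = 0 := by
      rw [Matrix.mulVec_sub, hBσ, hBρ θ hθ]; simp
    exact sub_eq_zero.mp (hBker θ hθ _ h0)
  -- smoothness
  have hAe : ∀ i j, ContDiffOn ℝ 1 (fun θ => A θ i j) Θ := stmt3_entryCD A hA
  have hBe : ∀ i j, ContDiffOn ℝ 1 (fun θ => B θ i j) Θ := by
    intro i j
    have he : (fun θ => B θ i j) = fun θ => A θ i j + (J - 1) i j := by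
      funext θ; simp [hBdef]
    rw [he]
    exact (hAe i j).add contDiffOn_const
  have hdetCD : ContDiffOn ℝ 1 (fun θ => (B θ).det) Θ := stmt3_detCD B hBe
  have hcramCD : ∀ i, ContDiffOn ℝ 1 (fun θ => (B θ).cramer (fun _ => 1) i) Θ := by
    intro i
    simp only [Matrix.cramer_apply]
    refine stmt3_detCD _ fun p q => ?_
    simp only [Matrix.updateCol_apply]
    by_cases hq : q = i
    · simp only [hq, if_pos rfl]; exact contDiffOn_const
    · simp only [if_neg hq]; exact hBe p q
  have hρCD : ContDiffOn ℝ 1 ρ Θ := by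
    refine contDiffOn_pi.2 fun i => ?_
    have he : (fun θ => ρ θ i) =
        fun θ => ((B θ).det)⁻¹ * (B θ).cramer (fun _ => 1) i := by
      funext θ; simp [hρdef]
    rw [he]
    exact (hdetCD.inv (fun x hx => hdet x hx)).mul (hcramCD i)
  refine ⟨ρ, fun θ hθ => ⟨⟨hρfix θ hθ, hρsum θ hθ⟩, huniq θ hθ⟩, hρCD, ?_⟩
  -- derivative part
  intro θ hθ k
  have hθmem : Θ ∈ nhds θ := hΘ.mem_nhds hθ
  have derivzero : ∀ (g : (Fin m → ℝ) → ℝ) (D : (Fin m → ℝ) →L[ℝ] ℝ) (c : ℝ),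
      HasFDerivWithinAt g D Θ θ → (∀ x ∈ Θ, g x = c) → D = 0 := by
    intro g D c hD hg
    have h1 : HasFDerivAt g D θ := hD.hasFDerivAt hθmem
    have heq : g =ᶠ[nhds θ] fun _ => c := Filter.eventuallyEq_of_mem hθmem hg
    have h2 : HasFDerivAt g 0 θ :=
      (hasFDerivAt_const (𝕜 := ℝ) c θ).congr_of_eventuallyEq heq
    exact h1.unique h2
  have hρd : DifferentiableWithinAt ℝ ρ Θ θ := (hρCD.differentiableOn one_ne_zero) θ hθ
  have hAd : DifferentiableWithinAt ℝ A Θ θ := (hA.differentiableOn one_ne_zero) θ hθ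
  set R := fderivWithin ℝ ρ Θ θ with hR
  set F := fderivWithin ℝ A Θ θ with hF
  have hRh : HasFDerivWithinAt ρ R Θ θ := hρd.hasFDerivWithinAt
  have hFh : HasFDerivWithinAt A F Θ θ := hAd.hasFDerivWithinAt
  have hρj : ∀ j, HasFDerivWithinAt (fun θ' => ρ θ' j)
      ((ContinuousLinearMap.proj j).comp R) Θ θ := fun j => by
    exact (ContinuousLinearMap.proj j).hasFDerivAt.comp_hasFDerivWithinAt θ hRh
  have hApq : ∀ p q, HasFDerivWithinAt (fun θ' => A θ' p q)
      ((ContinuousLinearMap.proj q).comp ((ContinuousLinearMap.proj p).comp F)) Θ θ := fun p q => by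
    exact (ContinuousLinearMap.proj q).hasFDerivAt.comp_hasFDerivWithinAt θ
      ((ContinuousLinearMap.proj p).hasFDerivAt.comp_hasFDerivWithinAt θ hFh)
  have hFcol : ∀ w : Fin m → ℝ, ∀ j, ∑ i, F w i j = 0 := by
    intro w j
    have hD : HasFDerivWithinAt (fun θ' => ∑ i, A θ' i j)
        (∑ i, (ContinuousLinearMap.proj j).comp ((ContinuousLinearMap.proj i).comp F)) Θ θ :=
      HasFDerivWithinAt.fun_sum fun i _ => hApq i j
    have h0 := derivzero _ _ 1 hD (fun x hx => hcol x hx j)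
    have h1 := congrFun (congrArg DFunLike.coe h0) w
    simp [ContinuousLinearMap.comp_apply, ContinuousLinearMap.proj_apply] at h1 ⊢; exact h1
  have hBpq : ∀ p q, HasFDerivWithinAt (fun θ' => B θ' p q)
      ((ContinuousLinearMap.proj q).comp ((ContinuousLinearMap.proj p).comp F)) Θ θ := by
    intro p q
    have he : (fun θ' => B θ' p q) = fun θ' => A θ' p q + (J - 1) p q := by
      funext θ'; simp [hBdef]
    rw [he]
    exact (hApq p q).add_const _
  have hmain : ∀ w : Fin m → ℝ, ∀ i,
      ∑ j, (B θ i j * R w j + ρ θ j * F w i j) = 0 := by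
    intro w i
    have hD : HasFDerivWithinAt (fun θ' => ∑ j, B θ' i j * ρ θ' j)
        (∑ j, (B θ i j • (ContinuousLinearMap.proj j).comp R +
             ρ θ j • (ContinuousLinearMap.proj j).comp ((ContinuousLinearMap.proj i).comp F))) Θ θ :=
      HasFDerivWithinAt.fun_sum fun j _ => (hBpq i j).mul (hρj j)
    have h0 := derivzero _ _ 1 hD (fun x hx => by
      have := congrFun (hBρ x hx) i
      simpa [Matrix.mulVec, dotProduct] using this)
    have h1 := congrFun (congrArg DFunLike.coe h0) w
    simp [smul_eq_mul, ContinuousLinearMap.comp_apply, ContinuousLinearMap.proj_apply] at h1 ⊢; exact h1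
  set w := (Pi.single k 1 : Fin m → ℝ) with hw
  set ζ := R w with hζ
  have hζsum : ∑ i, ζ i = 0 := by
    have hsum0 : ∑ i, ∑ j, (B θ i j * ζ j + ρ θ j * F w i j) = 0 :=
      Finset.sum_eq_zero fun i _ => hmain w i
    have e1 : ∑ i, ∑ j, B θ i j * ζ j = n * ∑ j, ζ j := by
      have he : ∀ i, ∑ j, B θ i j * ζ j = (B θ *ᵥ ζ) i := fun i => by
        simp [Matrix.mulVec, dotProduct]
      calc ∑ i, ∑ j, B θ i j * ζ j = ∑ i, (B θ *ᵥ ζ) i :=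
            Finset.sum_congr rfl fun i _ => he i
        _ = n * ∑ j, ζ j := hsumB θ hθ ζ
    have e2 : ∑ i, ∑ j, ρ θ j * F w i j = 0 := by
      rw [Finset.sum_comm]
      refine Finset.sum_eq_zero fun j _ => ?_
      rw [← Finset.mul_sum, hFcol w j, mul_zero]
    have : (n:ℝ) * ∑ j, ζ j = 0 := by
      have := hsum0
      rw [Finset.sum_congr rfl (fun i _ => Finset.sum_add_distrib),
        Finset.sum_add_distrib, e1, e2, add_zero] at this
      exact this
    rcases mul_eq_zero.mp this with h | h
    · exact absurd h hn'
    · exact h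
  have hBζ : ∀ i, (B θ *ᵥ ζ) i = -((F w).mulVec (ρ θ)) i := by
    intro i
    have h1 := hmain w i
    rw [Finset.sum_add_distrib] at h1
    have e1 : ∑ j, B θ i j * ζ j = (B θ *ᵥ ζ) i := by
      simp [Matrix.mulVec, dotProduct]
    have e2 : ∑ j, ρ θ j * F w i j = ((F w).mulVec (ρ θ)) i := by
      simp [Matrix.mulVec, dotProduct, mul_comm]
    rw [e1, e2] at h1
    linarith
  have hAmI : ∀ (x : Fin n → ℝ) i, ((A θ - 1) *ᵥ x) i = (A θ *ᵥ x) i - x i := by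
    intro x i
    rw [Matrix.sub_mulVec, Matrix.one_mulVec]
    simp
  refine ⟨⟨?_, hζsum⟩, ?_⟩
  · funext i
    rw [hAmI ζ i]
    have h := hBζ i
    rw [hBmul θ ζ i, hζsum] at h
    simp only [Pi.neg_apply]
    linarith
  · intro ζ' h1 h2
    have hd : A θ *ᵥ (ζ' - ζ) = ζ' - ζ := by
      funext i
      have e1 : ((A θ - 1) *ᵥ ζ') i = -((F w).mulVec (ρ θ)) i := by rw [h1]; rfl
      have e2 : ((A θ - 1) *ᵥ ζ) i = -((F w).mulVec (ρ θ)) i := by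
        have := hBζ i
        rw [hBmul θ ζ i, hζsum] at this
        rw [hAmI ζ i]
        linarith
      rw [hAmI ζ' i] at e1
      rw [hAmI ζ i] at e2
      rw [Matrix.mulVec_sub]
      simp only [Pi.sub_apply]
      linarith
    have hsd : ∑ i, (ζ' - ζ) i = 0 := by
      simp only [Pi.sub_apply]
      rw [Finset.sum_sub_distrib, h2, hζsum, sub_zero]
    have := stmt3_ker (A θ) (hpos θ hθ) (hcol θ hθ) _ hd hsd
    exact sub_eq_zero.mp this
end

section
/- Let A(θ) be as in the differentiability lemma (C¹, column-stochastic, strictly positive entries on open Θ ⊆ ℝᵐ), let ρ(θ) be the unique stationary distribution, and let φ ∈ ℝⁿ be fixed. If λ solves (A(θ)ᵀ − I)λ = −φ + (φ·ρ(θ)) 𝟏, then ∂_{θ_k}(φ · ρ(θ)) = λ · (∂_{θ_k} A(θ)) ρ(θ) for each k. -/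
open Matrix Finset

open Topology Filter

attribute [local instance] Matrix.normedAddCommGroup Matrix.normedSpace

noncomputable def entryCLM (n : ℕ) (i j : Fin n) : Matrix (Fin n) (Fin n) ℝ →L[ℝ] ℝ :=
  LinearMap.mkContinuous
    { toFun := fun M => M i j, map_add' := fun _ _ => rfl, map_smul' := fun _ _ => rfl }
    1 (fun M => by rw [one_mul]; exact M.norm_entry_le_entrywise_sup_norm)

theorem diffAt_det {E : Type*} [NormedAddCommGroup E] [NormedSpace ℝ E] {n : ℕ}
    {N : E → Matrix (Fin n) (Fin n) ℝ} {x : E}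
    (h : ∀ i j, DifferentiableAt ℝ (fun θ => N θ i j) x) :
    DifferentiableAt ℝ (fun θ => (N θ).det) x := by
  simp only [Matrix.det_apply']
  apply DifferentiableAt.fun_sum
  intro σ _
  have hp : DifferentiableAt ℝ (fun θ => ∏ i, N θ (σ i) i) x :=
    (HasFDerivAt.finset_prod (u := Finset.univ) (g := fun i θ => N θ (σ i) i)
      (fun i _ => (h (σ i) i).hasFDerivAt)).differentiableAt
  exact hp.const_mul _

theorem diffAt_adj {E : Type*} [NormedAddCommGroup E] [NormedSpace ℝ E] {n : ℕ}
    {N : E → Matrix (Fin n) (Fin n) ℝ} {x : E}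
    (h : ∀ i j, DifferentiableAt ℝ (fun θ => N θ i j) x) (i j : Fin n) :
    DifferentiableAt ℝ (fun θ => (N θ).adjugate i j) x := by
  simp only [Matrix.adjugate_apply]
  apply diffAt_det
  intro a b
  rcases eq_or_ne a j with rfl | hne
  · simp only [Matrix.updateRow_self]
    exact differentiableAt_const _
  · simp only [Matrix.updateRow_ne hne]
    exact h a b

/-- In the setting of the differentiability lemma (`A(θ)` is `C¹`,
column-stochastic with strictly positive entries on an open set `Θ ⊆ ℝᵐ`), let `ρ(θ)`
be the unique stationary distribution and fix `φ ∈ ℝⁿ`.  If `λ` solves the adjoint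
system `(A(θ₀)ᵀ − I)λ = −φ + (φ·ρ(θ₀)) 𝟏`, then
`∂_{θ_k}(φ · ρ(θ)) = λ · (∂_{θ_k} A(θ₀)) ρ(θ₀)` for each `k`. -/
theorem stmt5 (n m : ℕ) (hn : 0 < n)
    (Θ : Set (Fin m → ℝ)) (hΘ : IsOpen Θ)
    (A : (Fin m → ℝ) → Matrix (Fin n) (Fin n) ℝ)
    (hA : ContDiffOn ℝ 1 A Θ)
    (hpos : ∀ θ ∈ Θ, ∀ i j, 0 < A θ i j)
    (hcol : ∀ θ ∈ Θ, ∀ j, ∑ i, A θ i j = 1)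
    (ρ : (Fin m → ℝ) → (Fin n → ℝ))
    (hρ : ∀ θ ∈ Θ, (A θ).mulVec (ρ θ) = ρ θ ∧ ∑ i, ρ θ i = 1)
    (θ₀ : Fin m → ℝ) (hθ₀ : θ₀ ∈ Θ)
    (φ : Fin n → ℝ) (lam : Fin n → ℝ)
    (hlam : ((A θ₀)ᵀ - 1).mulVec lam = -φ + (φ ⬝ᵥ ρ θ₀) • (fun _ => (1 : ℝ))) :
    ∀ k : Fin m,
      fderivWithin ℝ (fun θ => φ ⬝ᵥ ρ θ) Θ θ₀ (Pi.single k 1) =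
        lam ⬝ᵥ ((fderivWithin ℝ A Θ θ₀ (Pi.single k 1)).mulVec (ρ θ₀)) := by
  intro k
  set v : Fin m → ℝ := Pi.single k 1 with hv
  have hmem : Θ ∈ 𝓝 θ₀ := hΘ.mem_nhds hθ₀
  -- A is differentiable at θ₀, entrywise too
  have hAd : DifferentiableAt ℝ A θ₀ :=
    (hA.differentiableOn one_ne_zero).differentiableAt hmem
  have hAe : ∀ i j, DifferentiableAt ℝ (fun θ => A θ i j) θ₀ := fun i j =>
    (entryCLM n i j).differentiableAt.comp θ₀ hAd
  have hAfd : ∀ i j, fderiv ℝ (fun θ => A θ i j) θ₀ v = (fderiv ℝ A θ₀ v) i j := by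
    intro i j
    have h1 : HasFDerivAt (fun θ => A θ i j)
        ((entryCLM n i j).comp (fderiv ℝ A θ₀)) θ₀ :=
      (entryCLM n i j).hasFDerivAt.comp θ₀ hAd.hasFDerivAt
    rw [h1.fderiv]; rfl
  -- the matrix M
  set M : (Fin m → ℝ) → Matrix (Fin n) (Fin n) ℝ :=
    fun θ => 1 - A θ + Matrix.of (fun _ _ => (1 : ℝ)) with hM
  have hMe : ∀ i j, DifferentiableAt ℝ (fun θ => M θ i j) θ₀ := by
    intro i j
    have he : (fun θ => M θ i j)
        = fun θ => (1 : Matrix (Fin n) (Fin n) ℝ) i j - A θ i j + 1 := by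
      funext θ; simp [hM, Matrix.sub_apply, Matrix.add_apply]
    rw [he]
    exact ((differentiableAt_const _).sub (hAe i j)).add_const 1
  -- J *ᵥ x
  have hJ : ∀ x : Fin n → ℝ,
      (Matrix.of (fun _ _ => (1 : ℝ)) : Matrix (Fin n) (Fin n) ℝ).mulVec x
        = fun _ => ∑ j, x j := by
    intro x; funext i; simp [Matrix.mulVec, dotProduct]
  have hMv : ∀ θ (x : Fin n → ℝ),
      (M θ).mulVec x = fun i => x i - (A θ).mulVec x i + ∑ j, x j := by
    intro θ x
    rw [hM]
    funext i
    rw [Matrix.add_mulVec, Matrix.sub_mulVec, Matrix.one_mulVec, hJ]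
    simp
  -- invertibility of M θ on Θ
  have hMunit : ∀ θ ∈ Θ, IsUnit (M θ) := by
    intro θ hθ
    rw [← Matrix.mulVec_injective_iff_isUnit]
    have hker : ∀ x : Fin n → ℝ, (M θ).mulVec x = 0 → x = 0 := by
      intro x hx0
      have hcomp : ∀ i, x i - (A θ).mulVec x i + ∑ j, x j = 0 := by
        intro i
        have := congrFun hx0 i
        rwa [hMv] at this
      -- sum of A *ᵥ x equals sum of x
      have hAsum : ∑ i, (A θ).mulVec x i = ∑ j, x j := by
        simp only [Matrix.mulVec, dotProduct]
        rw [Finset.sum_comm]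
        refine Finset.sum_congr rfl fun j _ => ?_
        rw [← Finset.sum_mul, hcol θ hθ j, one_mul]
      have hs0 : ∑ j, x j = 0 := by
        have := Finset.sum_congr rfl (fun i (_ : i ∈ Finset.univ) => hcomp i)
        simp only [Finset.sum_add_distrib, Finset.sum_sub_distrib, hAsum,
          Finset.sum_const, Finset.card_univ, Fintype.card_fin, sub_self, zero_add,
          Finset.sum_const_zero, smul_eq_mul, nsmul_eq_mul] at this
        have hn' : (n : ℝ) ≠ 0 := by positivity
        rw [mul_zero] at this
        rcases mul_eq_zero.mp this with h | h
        · exact absurd h hn'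
        · exact h
      have hfix : ∀ i, x i = (A θ).mulVec x i := by
        intro i
        have := hcomp i
        rw [hs0] at this
        linarith
      -- equality case of triangle inequality
      have habs_le : ∀ i, |x i| ≤ ∑ j, A θ i j * |x j| := by
        intro i
        rw [hfix i]
        calc |(A θ).mulVec x i| ≤ ∑ j, |A θ i j * x j| := by
              simp only [Matrix.mulVec, dotProduct]
              exact Finset.abs_sum_le_sum_abs _ _
          _ = ∑ j, A θ i j * |x j| := by
              refine Finset.sum_congr rfl fun j _ => ?_
              rw [abs_mul, abs_of_pos (hpos θ hθ i j)]
      have hsums : ∑ i, ∑ j, A θ i j * |x j| = ∑ i, |x i| := by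
        rw [Finset.sum_comm]
        calc ∑ j, ∑ i, A θ i j * |x j| = ∑ j, |x j| := by
              refine Finset.sum_congr rfl fun j _ => ?_
              rw [← Finset.sum_mul, hcol θ hθ j, one_mul]
          _ = ∑ i, |x i| := rfl
      have heq : ∀ i, |x i| = ∑ j, A θ i j * |x j| := by
        intro i
        have hz : ∑ i, ((∑ j, A θ i j * |x j|) - |x i|) = 0 := by
          rw [Finset.sum_sub_distrib, hsums, sub_self]
        have := (Finset.sum_eq_zero_iff_of_nonneg
          (fun i _ => sub_nonneg.mpr (habs_le i))).mp hz i (Finset.mem_univ i)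
        linarith
      -- conclude sign constancy and x = 0
      set i₀ : Fin n := ⟨0, hn⟩
      have hx_eq : |∑ j, A θ i₀ j * x j| = ∑ j, A θ i₀ j * |x j| := by
        have h1 := heq i₀
        have h2 : x i₀ = ∑ j, A θ i₀ j * x j := by
          rw [hfix i₀]; simp [Matrix.mulVec, dotProduct]
        rw [← h2, ← h1, h2]
      rcases le_or_gt 0 (∑ j, A θ i₀ j * x j) with hpos' | hneg
      · -- all x j ≥ 0
        have hz : ∑ j, A θ i₀ j * (|x j| - x j) = 0 := by
          rw [abs_of_nonneg hpos'] at hx_eq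
          simp only [mul_sub, Finset.sum_sub_distrib]
          rw [← hx_eq]; ring
        have hnn : ∀ j, 0 ≤ x j := by
          intro j
          have := (Finset.sum_eq_zero_iff_of_nonneg
            (fun j _ => mul_nonneg (hpos θ hθ i₀ j).le
              (sub_nonneg.mpr (le_abs_self _)))).mp hz j (Finset.mem_univ j)
          have h3 : |x j| - x j = 0 := by
            rcases mul_eq_zero.mp this with h | h
            · exact absurd h (hpos θ hθ i₀ j).ne'
            · exact h
          have := abs_nonneg (x j)
          linarith
        funext j
        have := (Finset.sum_eq_zero_iff_of_nonneg (fun j _ => hnn j)).mp hs0 j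
          (Finset.mem_univ j)
        simpa using this
      · -- all x j ≤ 0
        have hz : ∑ j, A θ i₀ j * (|x j| + x j) = 0 := by
          rw [abs_of_neg hneg] at hx_eq
          simp only [mul_add, Finset.sum_add_distrib]
          rw [← hx_eq]; ring
        have hnp : ∀ j, x j ≤ 0 := by
          intro j
          have := (Finset.sum_eq_zero_iff_of_nonneg
            (fun j _ => mul_nonneg (hpos θ hθ i₀ j).le
              (by linarith [neg_abs_le (x j)]))).mp hz j (Finset.mem_univ j)
          have h3 : |x j| + x j = 0 := by
            rcases mul_eq_zero.mp this with h | h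
            · exact absurd h (hpos θ hθ i₀ j).ne'
            · exact h
          have := abs_nonneg (x j)
          linarith
        funext j
        have hz2 : ∑ j, (-x j) = 0 := by
          rw [Finset.sum_neg_distrib, hs0, neg_zero]
        have := (Finset.sum_eq_zero_iff_of_nonneg
          (fun j _ => neg_nonneg.mpr (hnp j))).mp hz2 j (Finset.mem_univ j)
        simpa using (neg_eq_zero.mp this)
    intro x y hxy
    have : (M θ).mulVec (x - y) = 0 := by
      rw [Matrix.mulVec_sub, hxy, sub_self]
    have := hker _ this
    exact sub_eq_zero.mp this
  -- determinant nonzero on Θ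
  have hdetne : ∀ θ ∈ Θ, (M θ).det ≠ 0 := by
    intro θ hθ
    have h := (Matrix.isUnit_iff_isUnit_det _).mp (hMunit θ hθ)
    exact h.ne_zero
  -- explicit formula for ρ on Θ
  have hρform : ∀ θ ∈ Θ, ∀ j, ρ θ j = ((M θ).det)⁻¹ * ∑ l, (M θ).adjugate j l := by
    intro θ hθ j
    have hMρ : (M θ).mulVec (ρ θ) = fun _ => (1 : ℝ) := by
      rw [hMv]
      funext i
      rw [(hρ θ hθ).1, (hρ θ hθ).2]
      simp
    have h2 : (M θ).det • ρ θ = (M θ).adjugate.mulVec (fun _ => (1 : ℝ)) := by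
      rw [← hMρ, Matrix.mulVec_mulVec, Matrix.adjugate_mul, Matrix.smul_mulVec,
        Matrix.one_mulVec]
    have h3 := congrFun h2 j
    simp only [Pi.smul_apply, smul_eq_mul, Matrix.mulVec, dotProduct, mul_one] at h3
    rw [← h3, inv_mul_cancel_left₀ (hdetne θ hθ)]
  -- differentiability of the components of ρ at θ₀
  have hdet : DifferentiableAt ℝ (fun θ => (M θ).det) θ₀ := diffAt_det hMe
  have hρd : ∀ j, DifferentiableAt ℝ (fun θ => ρ θ j) θ₀ := by
    intro j
    have hg : DifferentiableAt ℝ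
        (fun θ => ((M θ).det)⁻¹ * ∑ l, (M θ).adjugate j l) θ₀ :=
      (hdet.inv (hdetne θ₀ hθ₀)).mul (DifferentiableAt.fun_sum fun l _ => diffAt_adj hMe j l)
    have hEq : (fun θ => ρ θ j) =ᶠ[𝓝 θ₀]
        fun θ => ((M θ).det)⁻¹ * ∑ l, (M θ).adjugate j l :=
      Filter.eventuallyEq_of_mem hmem fun θ hθ => hρform θ hθ j
    exact hEq.differentiableAt_iff.mpr hg
  set r' : Fin n → (Fin m → ℝ) →L[ℝ] ℝ := fun j => fderiv ℝ (fun θ => ρ θ j) θ₀ with hr'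
  set a' : Fin n → Fin n → (Fin m → ℝ) →L[ℝ] ℝ :=
    fun i j => fderiv ℝ (fun θ => A θ i j) θ₀ with ha'
  -- sum of ρ-derivatives vanishes
  have hsum0 : ∑ j, r' j v = 0 := by
    have h1 : HasFDerivAt (fun θ => ∑ j, ρ θ j) (∑ j, r' j) θ₀ :=
      HasFDerivAt.fun_sum fun j _ => (hρd j).hasFDerivAt
    have h2 : (fun θ => ∑ j, ρ θ j) =ᶠ[𝓝 θ₀] fun _ => (1 : ℝ) :=
      Filter.eventuallyEq_of_mem hmem fun θ hθ => (hρ θ hθ).2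
    have h3 : (∑ j, r' j : (Fin m → ℝ) →L[ℝ] ℝ) = 0 := by
      rw [← h1.fderiv, h2.fderiv_eq, fderiv_fun_const]
      rfl
    calc ∑ j, r' j v = (∑ j, r' j : (Fin m → ℝ) →L[ℝ] ℝ) v := by
          rw [ContinuousLinearMap.sum_apply]
      _ = 0 := by rw [h3]; rfl
  -- differentiated stationarity equation
  have hid1 : ∀ i, r' i v = ∑ j, (A θ₀ i j * r' j v + ρ θ₀ j * a' i j v) := by
    intro i
    have h1 : HasFDerivAt (fun θ => ∑ j, A θ i j * ρ θ j)
        (∑ j, (A θ₀ i j • r' j + ρ θ₀ j • a' i j)) θ₀ :=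
      HasFDerivAt.fun_sum fun j _ => ((hAe i j).hasFDerivAt.mul (hρd j).hasFDerivAt)
    have h2 : (fun θ => ∑ j, A θ i j * ρ θ j) =ᶠ[𝓝 θ₀] fun θ => ρ θ i :=
      Filter.eventuallyEq_of_mem hmem fun θ hθ => by
        have := congrFun (hρ θ hθ).1 i
        simpa [Matrix.mulVec, dotProduct] using this
    have h3 : (r' i : (Fin m → ℝ) →L[ℝ] ℝ)
        = ∑ j, (A θ₀ i j • r' j + ρ θ₀ j • a' i j) := by
      show fderiv ℝ (fun θ => ρ θ i) θ₀ = _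
      rw [← h2.fderiv_eq, h1.fderiv]
    have h4 := congrArg (fun (L : (Fin m → ℝ) →L[ℝ] ℝ) => L v) h3
    simpa [ContinuousLinearMap.sum_apply, ContinuousLinearMap.add_apply,
      ContinuousLinearMap.smul_apply, smul_eq_mul] using h4
  -- componentwise adjoint equation
  have hlamc : ∀ j, ∑ i, A θ₀ i j * lam i = lam j - φ j + (φ ⬝ᵥ ρ θ₀) := by
    intro j
    have h := congrFun hlam j
    simp only [Matrix.mulVec, dotProduct, Matrix.sub_apply, Matrix.transpose_apply,
      Matrix.one_apply, Pi.add_apply, Pi.neg_apply, Pi.smul_apply, smul_eq_mul, mul_one,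
      sub_mul, Finset.sum_sub_distrib, ite_mul, one_mul, zero_mul,
      Finset.sum_ite_eq, Finset.mem_univ, if_true] at h
    simp only [dotProduct]
    linarith
  -- rewrite the goal without `Within`
  rw [fderivWithin_of_isOpen hΘ hθ₀, fderivWithin_of_isOpen hΘ hθ₀]
  have hL : HasFDerivAt (fun θ => φ ⬝ᵥ ρ θ) (∑ i, φ i • r' i) θ₀ := by
    have he : (fun θ => φ ⬝ᵥ ρ θ) = fun θ => ∑ i, φ i * ρ θ i := by
      funext θ; simp [dotProduct]
    rw [he]
    exact HasFDerivAt.fun_sum fun i _ => ((hρd i).hasFDerivAt.const_mul (φ i))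
  rw [hL.fderiv]
  have hRHS : lam ⬝ᵥ ((fderiv ℝ A θ₀ v).mulVec (ρ θ₀))
      = ∑ i, lam i * ∑ j, a' i j v * ρ θ₀ j := by
    simp only [dotProduct, Matrix.mulVec, ha']
    refine Finset.sum_congr rfl fun i _ => ?_
    congr 1
    exact Finset.sum_congr rfl fun j _ => by rw [hAfd i j]
  rw [hRHS]
  have hLHS : (∑ i, φ i • r' i : (Fin m → ℝ) →L[ℝ] ℝ) v = ∑ i, φ i * r' i v := by
    simp [ContinuousLinearMap.sum_apply]
  rw [hLHS]
  -- final algebra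
  have key : ∀ i, ∑ j, a' i j v * ρ θ₀ j = r' i v - ∑ j, A θ₀ i j * r' j v := by
    intro i
    have h := hid1 i
    rw [Finset.sum_add_distrib] at h
    have hc : ∑ j, ρ θ₀ j * a' i j v = ∑ j, a' i j v * ρ θ₀ j :=
      Finset.sum_congr rfl fun j _ => mul_comm _ _
    rw [hc] at h
    linarith
  have hstep1 : ∑ i, lam i * ∑ j, a' i j v * ρ θ₀ j
      = ∑ i, lam i * r' i v - ∑ j, (∑ i, A θ₀ i j * lam i) * r' j v := by
    calc ∑ i, lam i * ∑ j, a' i j v * ρ θ₀ j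
        = ∑ i, (lam i * r' i v - lam i * ∑ j, A θ₀ i j * r' j v) := by
          refine Finset.sum_congr rfl fun i _ => ?_
          rw [key i, mul_sub]
      _ = ∑ i, lam i * r' i v - ∑ i, lam i * ∑ j, A θ₀ i j * r' j v := by
          rw [Finset.sum_sub_distrib]
      _ = ∑ i, lam i * r' i v - ∑ j, (∑ i, A θ₀ i j * lam i) * r' j v := by
          congr 1
          calc ∑ i, lam i * ∑ j, A θ₀ i j * r' j v
              = ∑ i, ∑ j, (A θ₀ i j * lam i) * r' j v := by
                refine Finset.sum_congr rfl fun i _ => ?_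
                rw [Finset.mul_sum]
                exact Finset.sum_congr rfl fun j _ => by ring
            _ = ∑ j, ∑ i, (A θ₀ i j * lam i) * r' j v := Finset.sum_comm
            _ = ∑ j, (∑ i, A θ₀ i j * lam i) * r' j v :=
                Finset.sum_congr rfl fun j _ => (Finset.sum_mul _ _ _).symm
  rw [hstep1]
  have h5 : ∑ j, (∑ i, A θ₀ i j * lam i) * r' j v
      = ∑ j, lam j * r' j v - ∑ j, φ j * r' j v + (φ ⬝ᵥ ρ θ₀) * ∑ j, r' j v := by
    calc ∑ j, (∑ i, A θ₀ i j * lam i) * r' j v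
        = ∑ j, (lam j - φ j + (φ ⬝ᵥ ρ θ₀)) * r' j v :=
          Finset.sum_congr rfl fun j _ => by rw [hlamc j]
      _ = ∑ j, (lam j * r' j v - φ j * r' j v + (φ ⬝ᵥ ρ θ₀) * r' j v) :=
          Finset.sum_congr rfl fun j _ => by ring
      _ = _ := by
          rw [Finset.sum_add_distrib, Finset.sum_sub_distrib, Finset.mul_sum]
  rw [h5, hsum0]
  ring
end

section
/- Under assumptions A1–A4, f(θ) = T_c(ρ(·,θ), ρ*) is locally semiconvex: with C₀ = ‖c‖_∞ ‖h‖₁, the function θ ↦ f(θ) + C₀|θ|²/2 is convex on convex subsets of Θ. -/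
open MeasureTheory Set Filter Finset
open ENNReal

/-- The Kantorovich optimal transport cost between two measures. -/
noncomputable def Tc {X : Type*} [MeasurableSpace X] (c : X × X → ℝ)
    (μ ν : Measure X) : ℝ :=
  sInf {r : ℝ | ∃ π : Measure (X × X),
    π.map Prod.fst = μ ∧ π.map Prod.snd = ν ∧ r = ∫ z, c z ∂π}

section AuxStmt13

lemma aux_map_withDensity_fst {X Y : Type*} [MeasurableSpace X] [MeasurableSpace Y]
    (π : Measure (X × Y)) {g : X → ℝ≥0∞} (hg : Measurable g) :
    (π.withDensity (fun z => g z.1)).map Prod.fst = (π.map Prod.fst).withDensity g := by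
  ext s hs
  rw [Measure.map_apply measurable_fst hs, withDensity_apply _ (measurable_fst hs),
    withDensity_apply _ hs, ← lintegral_indicator (measurable_fst hs) _,
    ← lintegral_indicator hs _, lintegral_map (hg.indicator hs) measurable_fst]
  exact lintegral_congr fun z => by by_cases hz : z.1 ∈ s <;> simp [Set.indicator, hz]

lemma aux_withDensity_le {X : Type*} [MeasurableSpace X] (π : Measure X)
    {g : X → ℝ≥0∞} (hg : ∀ z, g z ≤ 1) : π.withDensity g ≤ π := by
  refine Measure.le_intro fun s hs _ => ?_
  rw [withDensity_apply _ hs]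
  calc ∫⁻ z in s, g z ∂π ≤ ∫⁻ _ in s, 1 ∂π := lintegral_mono fun z => hg z
  _ = π s := by simp

lemma aux_cost_bound {X : Type*} [MeasurableSpace X] [TopologicalSpace X] [OpensMeasurableSpace X] [SecondCountableTopology X]
    (Ω : Set X) (hΩ : IsCompact Ω) (c : X × X → ℝ) (hc : Continuous c)
    (hcnonneg : ∀ z, 0 ≤ c z) (κ : Measure (X × X)) [IsFiniteMeasure κ]
    (hκ : κ ((Ω ×ˢ Ω)ᶜ) = 0) :
    Integrable c κ ∧ 0 ≤ ∫ z, c z ∂κ ∧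
      ∫ z, c z ∂κ ≤ (sSup ((fun z => |c z|) '' (Ω ×ˢ Ω))) * (κ Set.univ).toReal := by
  set M := sSup ((fun z => |c z|) '' (Ω ×ˢ Ω)) with hMdef
  have hbdd : BddAbove ((fun z => |c z|) '' (Ω ×ˢ Ω)) :=
    ((hΩ.prod hΩ).image hc.abs).bddAbove
  have hM : ∀ z ∈ Ω ×ˢ Ω, |c z| ≤ M := fun z hz => le_csSup hbdd ⟨z, hz, rfl⟩
  have hae : ∀ᵐ z ∂κ, z ∈ Ω ×ˢ Ω := by
    rw [ae_iff]
    exact hκ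
  have hbound : ∀ᵐ z ∂κ, ‖c z‖ ≤ M := hae.mono fun z hz => by
    rw [Real.norm_eq_abs]; exact hM z hz
  have hint : Integrable c κ :=
    (integrable_const M).mono' hc.aestronglyMeasurable hbound
  refine ⟨hint, integral_nonneg hcnonneg, ?_⟩
  calc ∫ z, c z ∂κ ≤ ∫ _, M ∂κ :=
        integral_mono_ae hint (integrable_const M)
          (hae.mono fun z hz => le_trans (le_abs_self _) (hM z hz))
  _ = M * (κ Set.univ).toReal := by rw [integral_const, smul_eq_mul, mul_comm]; rfl

lemma aux_marg_null {X : Type*} [MeasurableSpace X] {Ω : Set X} (hΩm : MeasurableSet Ω)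
    {π : Measure (X × X)} {μ ν : Measure X} (hfst : π.map Prod.fst = μ)
    (hsnd : π.map Prod.snd = ν) (hμ : μ Ωᶜ = 0) (hν : ν Ωᶜ = 0) :
    π ((Ω ×ˢ Ω)ᶜ) = 0 := by
  have h1 : π (Prod.fst ⁻¹' Ωᶜ) = 0 := by
    rw [← Measure.map_apply measurable_fst hΩm.compl, hfst]; exact hμ
  have h2 : π (Prod.snd ⁻¹' Ωᶜ) = 0 := by
    rw [← Measure.map_apply measurable_snd hΩm.compl, hsnd]; exact hν
  refine measure_mono_null ?_ (measure_union_null h1 h2)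
  intro z hz
  simp only [Set.mem_compl_iff, Set.mem_prod, not_and_or] at hz
  simpa using hz

lemma aux_univ_fst {X : Type*} [MeasurableSpace X] (π : Measure (X × X)) :
    (π.map Prod.fst) Set.univ = π Set.univ := by
  rw [Measure.map_apply measurable_fst MeasurableSet.univ, Set.preimage_univ]

lemma aux_univ_snd {X : Type*} [MeasurableSpace X] (π : Measure (X × X)) :
    (π.map Prod.snd) Set.univ = π Set.univ := by
  rw [Measure.map_apply measurable_snd MeasurableSet.univ, Set.preimage_univ]

lemma aux_withDensity_null {X : Type*} [MeasurableSpace X] {μ : Measure X}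
    {p : X → ℝ≥0∞} {Ω : Set X} (hΩm : MeasurableSet Ω)
    (hp : ∀ᵐ x ∂μ, x ∉ Ω → p x = 0) : μ.withDensity p Ωᶜ = 0 := by
  rw [withDensity_apply _ hΩm.compl,
    setLIntegral_congr_fun_ae hΩm.compl (hp.mono fun x hx hxc => hx hxc)]
  simp

end AuxStmt13

/-- Under A1–A4, `f(θ) = T_c(ρ(·,θ), ρ*)` is locally semiconvex:
with `C₀ = ‖c‖_∞ ‖h‖₁`, the map `θ ↦ f(θ) + C₀|θ|²/2` is convex on convex subsets
of `Θ`.  Here A4 is the local semiconvexity of `θ ↦ ρ(x,θ)` with `∇²_θ ρ ≥ −h`,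
expressed by the convexity of `θ ↦ ρ(x,θ) + h(x)|θ|²/2` on convex subsets of `Θ`. -/
theorem stmt13 (d m : ℕ)
    (Ω : Set (EuclideanSpace ℝ (Fin d))) (hΩ : IsCompact Ω)
    (Θ : Set (Fin m → ℝ)) (hΘ : IsOpen Θ)
    (ρ : EuclideanSpace ℝ (Fin d) → (Fin m → ℝ) → ℝ)
    (hρint : ∀ θ ∈ Θ, Integrable (fun x => ρ x θ))
    (hρprob : ∀ θ ∈ Θ, (∀ x, 0 ≤ ρ x θ) ∧ (∫ x, ρ x θ) = 1 ∧ ∀ x ∉ Ω, ρ x θ = 0)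
    (η : EuclideanSpace ℝ (Fin d) → ℝ) (hη : Integrable η)
    (hρdiff : ∀ x, ∀ θ ∈ Θ, DifferentiableAt ℝ (ρ x) θ ∧ ‖fderiv ℝ (ρ x) θ‖ ≤ η x)
    (c : EuclideanSpace ℝ (Fin d) × EuclideanSpace ℝ (Fin d) → ℝ)
    (hc : Continuous c) (hcnonneg : ∀ z, 0 ≤ c z)
    (ρstar : Measure (EuclideanSpace ℝ (Fin d)))
    (hρstar : IsProbabilityMeasure ρstar) (hρstarsupp : ρstar Ωᶜ = 0)
    (f : (Fin m → ℝ) → ℝ)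
    (hf : ∀ θ, f θ = Tc c (volume.withDensity fun x => ENNReal.ofReal (ρ x θ)) ρstar)
    -- A4: local semiconvexity of `θ ↦ ρ(x,θ)` with Hessian bounded below by `−h(x)`
    (h : EuclideanSpace ℝ (Fin d) → ℝ) (hh : Integrable h) (hhpos : ∀ x, 0 ≤ h x)
    (hA4 : ∀ x, ∀ s ⊆ Θ, Convex ℝ s →
      ConvexOn ℝ s (fun θ => ρ x θ + h x * (∑ i, θ i ^ 2) / 2))
    (C₀ : ℝ)
    (hC₀ : C₀ = sSup ((fun z => |c z|) '' (Ω ×ˢ Ω)) * ∫ x, |h x|) :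
    ∀ s ⊆ Θ, Convex ℝ s →
      ConvexOn ℝ s (fun θ => f θ + C₀ * (∑ i, θ i ^ 2) / 2) := by
  intro s hsΘ hsconv
  have hΩm : MeasurableSet Ω := hΩ.isClosed.measurableSet
  set M := sSup ((fun z => |c z|) '' (Ω ×ˢ Ω)) with hMdef
  -- Ω is nonempty
  have hΩne : Ω.Nonempty := by
    by_contra hne
    rw [Set.not_nonempty_iff_eq_empty] at hne
    have h0 : ρstar Set.univ = 0 := by
      rw [← Set.compl_empty, ← hne]; exact hρstarsupp
    simp [hρstar.measure_univ] at h0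
  have hbdd : BddAbove ((fun z => |c z|) '' (Ω ×ˢ Ω)) :=
    ((hΩ.prod hΩ).image hc.abs).bddAbove
  have hMnonneg : 0 ≤ M := by
    obtain ⟨x₀, hx₀⟩ := hΩne
    exact le_trans (abs_nonneg _) (le_csSup hbdd ⟨(x₀, x₀), ⟨hx₀, hx₀⟩, rfl⟩)
  have hHnn : 0 ≤ ∫ x, h x := integral_nonneg hhpos
  have hC₀' : C₀ = M * ∫ x, h x := by
    rw [hC₀, hMdef]
    congr 1
    exact integral_congr_ae (Eventually.of_forall fun x => abs_of_nonneg (hhpos x))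
  refine ⟨hsconv, ?_⟩
  intro θ₀ hθ₀ θ₁ hθ₁ a b ha hb hab
  rcases eq_or_lt_of_le ha with ha0 | ha'
  · have hb1 : b = 1 := by linarith
    simp [← ha0, hb1]
  rcases eq_or_lt_of_le hb with hb0 | hb'
  · have ha1 : a = 1 := by linarith
    simp [← hb0, ha1]
  -- nondegenerate case
  set θt := a • θ₀ + b • θ₁ with hθtdef
  have hθt : θt ∈ s := hsconv hθ₀ hθ₁ ha hb hab
  have hθ₀Θ : θ₀ ∈ Θ := hsΘ hθ₀
  have hθ₁Θ : θ₁ ∈ Θ := hsΘ hθ₁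
  have hθtΘ : θt ∈ Θ := hsΘ hθt
  set Q : (Fin m → ℝ) → ℝ := fun θ => ∑ i, θ i ^ 2 with hQdef
  set D : ℝ := (a * Q θ₀ + b * Q θ₁ - Q θt) / 2 with hDdef
  have hQt : ∀ i, θt i = a * θ₀ i + b * θ₁ i := fun i => by
    simp [hθtdef, Pi.add_apply, Pi.smul_apply, smul_eq_mul]
  have hD : 0 ≤ D := by
    rw [hDdef]
    have hQle : Q θt ≤ a * Q θ₀ + b * Q θ₁ := by
      rw [hQdef]
      simp only
      rw [Finset.mul_sum, Finset.mul_sum, ← Finset.sum_add_distrib]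
      refine Finset.sum_le_sum fun i _ => ?_
      rw [hQt i]
      nlinarith [sq_nonneg (θ₀ i - θ₁ i), mul_nonneg ha hb]
    linarith
  -- A4 pointwise inequality
  have hA : ∀ x, ρ x θt ≤ a * ρ x θ₀ + b * ρ x θ₁ + h x * D := by
    intro x
    have := (hA4 x s hsΘ hsconv).2 hθ₀ hθ₁ ha hb hab
    simp only [smul_eq_mul] at this
    rw [hDdef]
    nlinarith [this]
  -- measurable representatives
  have hsm₀ := (hρint θ₀ hθ₀Θ).1
  have hsm₁ := (hρint θ₁ hθ₁Θ).1
  have hsmt := (hρint θt hθtΘ).1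
  set r₀ := hsm₀.mk _ with hr₀def
  set r₁ := hsm₁.mk _ with hr₁def
  set rt := hsmt.mk _ with hrtdef
  have hr₀m : Measurable r₀ := hsm₀.stronglyMeasurable_mk.measurable
  have hr₁m : Measurable r₁ := hsm₁.stronglyMeasurable_mk.measurable
  have hrtm : Measurable rt := hsmt.stronglyMeasurable_mk.measurable
  have he₀ : (fun x => ρ x θ₀) =ᵐ[volume] r₀ := hsm₀.ae_eq_mk
  have he₁ : (fun x => ρ x θ₁) =ᵐ[volume] r₁ := hsm₁.ae_eq_mk
  have het : (fun x => ρ x θt) =ᵐ[volume] rt := hsmt.ae_eq_mk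
  set rbar : EuclideanSpace ℝ (Fin d) → ℝ := fun x => a * r₀ x + b * r₁ x with hrbardef
  have hrbarm : Measurable rbar := (hr₀m.const_mul a).add (hr₁m.const_mul b)
  -- integrability and normalization
  have hint₀ : Integrable r₀ := (hρint θ₀ hθ₀Θ).congr he₀
  have hint₁ : Integrable r₁ := (hρint θ₁ hθ₁Θ).congr he₁
  have hintt : Integrable rt := (hρint θt hθtΘ).congr het
  have hintbar : Integrable rbar := (hint₀.const_mul a).add (hint₁.const_mul b)
  have hI₀ : ∫ x, r₀ x = 1 := by
    rw [← integral_congr_ae he₀]; exact (hρprob θ₀ hθ₀Θ).2.1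
  have hI₁ : ∫ x, r₁ x = 1 := by
    rw [← integral_congr_ae he₁]; exact (hρprob θ₁ hθ₁Θ).2.1
  have hIt : ∫ x, rt x = 1 := by
    rw [← integral_congr_ae het]; exact (hρprob θt hθtΘ).2.1
  have hIbar : ∫ x, rbar x = 1 := by
    rw [hrbardef]
    rw [integral_add (hint₀.const_mul a) (hint₁.const_mul b), integral_const_mul,
      integral_const_mul, hI₀, hI₁]
    simpa using hab
  have hnn₀ : ∀ᵐ x, 0 ≤ r₀ x := he₀.mono fun x hx => hx ▸ (hρprob θ₀ hθ₀Θ).1 x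
  have hnn₁ : ∀ᵐ x, 0 ≤ r₁ x := he₁.mono fun x hx => hx ▸ (hρprob θ₁ hθ₁Θ).1 x
  have hnnt : ∀ᵐ x, 0 ≤ rt x := het.mono fun x hx => hx ▸ (hρprob θt hθtΘ).1 x
  have hnnbar : ∀ᵐ x, 0 ≤ rbar x := hnn₀.mp (hnn₁.mono fun x h1 h0 =>
    add_nonneg (mul_nonneg ha h0) (mul_nonneg hb h1))
  have hsupp₀ : ∀ᵐ x, x ∉ Ω → r₀ x = 0 := he₀.mono fun x hx hxn => by
    rw [← hx]; exact (hρprob θ₀ hθ₀Θ).2.2 x hxn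
  have hsupp₁ : ∀ᵐ x, x ∉ Ω → r₁ x = 0 := he₁.mono fun x hx hxn => by
    rw [← hx]; exact (hρprob θ₁ hθ₁Θ).2.2 x hxn
  have hsuppt : ∀ᵐ x, x ∉ Ω → rt x = 0 := het.mono fun x hx hxn => by
    rw [← hx]; exact (hρprob θt hθtΘ).2.2 x hxn
  have hsuppbar : ∀ᵐ x, x ∉ Ω → rbar x = 0 := hsupp₀.mp (hsupp₁.mono fun x h1 h0 hxn => by
    rw [hrbardef]; simp [h0 hxn, h1 hxn])
  -- the key a.e. inequality from A4
  have hkey : ∀ᵐ x, rt x ≤ rbar x + h x * D := by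
    filter_upwards [he₀, he₁, het] with x hx0 hx1 hxt
    rw [hrbardef]
    simp only [← hx0, ← hx1, ← hxt]
    linarith [hA x]
  -- densities in ℝ≥0∞
  set pt : EuclideanSpace ℝ (Fin d) → ℝ≥0∞ := fun x => ENNReal.ofReal (rt x) with hptdef
  set pbar : EuclideanSpace ℝ (Fin d) → ℝ≥0∞ := fun x => ENNReal.ofReal (rbar x) with hpbardef
  have hptm : Measurable pt := ENNReal.measurable_ofReal.comp hrtm
  have hpbarm : Measurable pbar := ENNReal.measurable_ofReal.comp hrbarm
  set μt := volume.withDensity pt with hμtdef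
  set μbar := volume.withDensity pbar with hμbardef
  have hμt_eq : volume.withDensity (fun x => ENNReal.ofReal (ρ x θt)) = μt :=
    withDensity_congr_ae (het.mono fun x hx => by simp only [hx]; rfl)
  have hμ₀_eq : volume.withDensity (fun x => ENNReal.ofReal (ρ x θ₀))
      = volume.withDensity (fun x => ENNReal.ofReal (r₀ x)) :=
    withDensity_congr_ae (he₀.mono fun x hx => by simp only [hx])
  have hμ₁_eq : volume.withDensity (fun x => ENNReal.ofReal (ρ x θ₁))
      = volume.withDensity (fun x => ENNReal.ofReal (r₁ x)) :=
    withDensity_congr_ae (he₁.mono fun x hx => by simp only [hx])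
  -- the mixture identity
  have hmix : (ENNReal.ofReal a) • (volume.withDensity fun x => ENNReal.ofReal (ρ x θ₀))
      + (ENNReal.ofReal b) • (volume.withDensity fun x => ENNReal.ofReal (ρ x θ₁)) = μbar := by
    rw [hμ₀_eq, hμ₁_eq,
      ← withDensity_smul' (ENNReal.ofReal a) _ ofReal_ne_top,
      ← withDensity_smul' (ENNReal.ofReal b) _ ofReal_ne_top,
      ← withDensity_add_left (show Measurable (ENNReal.ofReal a • fun x => ENNReal.ofReal (r₀ x)) from
        Measurable.const_smul (ENNReal.measurable_ofReal.comp hr₀m) _)]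
    refine withDensity_congr_ae ?_
    filter_upwards [hnn₀, hnn₁] with x h0 h1
    simp only [Pi.add_apply, Pi.smul_apply, smul_eq_mul, hpbardef, hrbardef]
    rw [← ENNReal.ofReal_mul ha, ← ENNReal.ofReal_mul hb,
      ← ENNReal.ofReal_add (mul_nonneg ha h0) (mul_nonneg hb h1)]
  -- named measures
  set μ₀ := volume.withDensity (fun x => ENNReal.ofReal (ρ x θ₀)) with hμ₀def
  set μ₁ := volume.withDensity (fun x => ENNReal.ofReal (ρ x θ₁)) with hμ₁def
  -- the coupling-cost sets
  set S : Measure (EuclideanSpace ℝ (Fin d)) → Set ℝ := fun μ =>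
    {r | ∃ π : Measure (EuclideanSpace ℝ (Fin d) × EuclideanSpace ℝ (Fin d)),
      π.map Prod.fst = μ ∧ π.map Prod.snd = ρstar ∧ r = ∫ z, c z ∂π} with hSdef
  have hfS : ∀ θ, f θ = sInf (S (volume.withDensity fun x => ENNReal.ofReal (ρ x θ))) :=
    fun θ => by rw [hf θ]; rfl
  have hBdd : ∀ μ', BddBelow (S μ') := fun μ' =>
    ⟨0, fun r ⟨π, _, _, hr⟩ => hr ▸ integral_nonneg hcnonneg⟩
  -- support facts
  have hμ₀Ω : μ₀ Ωᶜ = 0 := aux_withDensity_null hΩm (Eventually.of_forall fun x hx => by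
    rw [(hρprob θ₀ hθ₀Θ).2.2 x hx, ENNReal.ofReal_zero])
  have hμ₁Ω : μ₁ Ωᶜ = 0 := aux_withDensity_null hΩm (Eventually.of_forall fun x hx => by
    rw [(hρprob θ₁ hθ₁Θ).2.2 x hx, ENNReal.ofReal_zero])
  have hμtΩ : μt Ωᶜ = 0 := aux_withDensity_null hΩm (hsuppt.mono fun x hx hxn => by
    rw [hptdef]; simp [hx hxn])
  have hμbarΩ : μbar Ωᶜ = 0 := aux_withDensity_null hΩm (hsuppbar.mono fun x hx hxn => by
    rw [hpbardef]; simp [hx hxn])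
  -- masses
  have hlin : ∀ r : EuclideanSpace ℝ (Fin d) → ℝ, Integrable r → (∀ᵐ x, 0 ≤ r x) →
      (∫ x, r x) = 1 → ∫⁻ x, ENNReal.ofReal (r x) = 1 := fun r hint hnn hI => by
    rw [← ofReal_integral_eq_lintegral_ofReal hint hnn, hI, ENNReal.ofReal_one]
  have hmass₀ : μ₀ Set.univ = 1 := by
    rw [hμ₀_eq, withDensity_apply _ MeasurableSet.univ, Measure.restrict_univ]
    exact hlin r₀ hint₀ hnn₀ hI₀
  have hmass₁ : μ₁ Set.univ = 1 := by
    rw [hμ₁_eq, withDensity_apply _ MeasurableSet.univ, Measure.restrict_univ]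
    exact hlin r₁ hint₁ hnn₁ hI₁
  have hmasst : ∫⁻ x, pt x = 1 := hlin rt hintt hnnt hIt
  have hmassμt : μt Set.univ = 1 := by
    rw [hμtdef, withDensity_apply _ MeasurableSet.univ, Measure.restrict_univ]
    exact hmasst
  have hmassbar : μbar Set.univ = 1 := by
    rw [hμbardef, withDensity_apply _ MeasurableSet.univ, Measure.restrict_univ]
    exact hlin rbar hintbar hnnbar hIbar
  haveI hP₀ : IsProbabilityMeasure μ₀ := ⟨hmass₀⟩
  haveI hP₁ : IsProbabilityMeasure μ₁ := ⟨hmass₁⟩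
  have hSne₀ : (S μ₀).Nonempty :=
    ⟨∫ z, c z ∂(μ₀.prod ρstar), μ₀.prod ρstar,
      by rw [Measure.map_fst_prod]; simp [measure_univ],
      by rw [Measure.map_snd_prod]; simp [measure_univ], rfl⟩
  have hSne₁ : (S μ₁).Nonempty :=
    ⟨∫ z, c z ∂(μ₁.prod ρstar), μ₁.prod ρstar,
      by rw [Measure.map_fst_prod]; simp [measure_univ],
      by rw [Measure.map_snd_prod]; simp [measure_univ], rfl⟩
  -- KEY estimate
  have hKEY : ∀ rv₀ ∈ S μ₀, ∀ rv₁ ∈ S μ₁,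
      f θt ≤ a * rv₀ + b * rv₁ + M * (D * ∫ x, h x) := by
    rintro rv₀ ⟨π₀, hπ₀f, hπ₀s, hrv₀⟩ rv₁ ⟨π₁, hπ₁f, hπ₁s, hrv₁⟩
    haveI : IsFiniteMeasure π₀ := by
      constructor; rw [← aux_univ_fst π₀, hπ₀f, hmass₀]; exact one_lt_top
    haveI : IsFiniteMeasure π₁ := by
      constructor; rw [← aux_univ_fst π₁, hπ₁f, hmass₁]; exact one_lt_top
    have hπ₀Ω := aux_marg_null hΩm hπ₀f hπ₀s hμ₀Ω hρstarsupp
    have hπ₁Ω := aux_marg_null hΩm hπ₁f hπ₁s hμ₁Ω hρstarsupp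
    obtain ⟨hcint₀, hcnn₀, hcle₀⟩ := aux_cost_bound Ω hΩ c hc hcnonneg π₀ hπ₀Ω
    obtain ⟨hcint₁, hcnn₁, hcle₁⟩ := aux_cost_bound Ω hΩ c hc hcnonneg π₁ hπ₁Ω
    set π := ENNReal.ofReal a • π₀ + ENNReal.ofReal b • π₁ with hπdef
    have hπfst : π.map Prod.fst = μbar := by
      rw [hπdef, Measure.map_add _ _ measurable_fst, Measure.map_smul, Measure.map_smul,
        hπ₀f, hπ₁f]
      exact hmix
    have hπsnd : π.map Prod.snd = ρstar := by
      rw [hπdef, Measure.map_add _ _ measurable_snd, Measure.map_smul, Measure.map_smul,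
        hπ₀s, hπ₁s, ← add_smul, ← ENNReal.ofReal_add ha hb, hab, ENNReal.ofReal_one, one_smul]
    haveI : IsFiniteMeasure π := by
      constructor; rw [← aux_univ_fst π, hπfst, hmassbar]; exact one_lt_top
    have hπΩ : π ((Ω ×ˢ Ω)ᶜ) = 0 := aux_marg_null hΩm hπfst hπsnd hμbarΩ hρstarsupp
    obtain ⟨hcintπ, hcnnπ, _⟩ := aux_cost_bound Ω hΩ c hc hcnonneg π hπΩ
    have hcostπ : ∫ z, c z ∂π = a * rv₀ + b * rv₁ := by
      rw [hπdef, integral_add_measure (hcint₀.smul_measure ofReal_ne_top)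
        (hcint₁.smul_measure ofReal_ne_top), integral_smul_measure, integral_smul_measure,
        ENNReal.toReal_ofReal ha, ENNReal.toReal_ofReal hb, hrv₀, hrv₁, smul_eq_mul, smul_eq_mul]
    -- surgery
    set q : EuclideanSpace ℝ (Fin d) → ℝ≥0∞ := fun x => min (pt x) (pbar x) with hqdef
    have hqm : Measurable q := hptm.min hpbarm
    set g : EuclideanSpace ℝ (Fin d) → ℝ≥0∞ :=
      fun x => if pbar x = 0 then 0 else q x / pbar x with hgdef
    have hgm : Measurable g :=
      Measurable.ite (hpbarm (measurableSet_singleton 0)) measurable_const (hqm.div hpbarm)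
    have hg1 : ∀ x, g x ≤ 1 := fun x => by
      rw [hgdef]; dsimp only
      split
      · exact zero_le_one
      · exact ENNReal.div_le_of_le_mul (by rw [one_mul]; exact min_le_right _ _)
    have hmul : ∀ x, pbar x * g x = q x := fun x => by
      rw [hgdef]; dsimp only
      split
      · rename_i h0
        rw [mul_zero]
        exact (le_antisymm (le_trans (min_le_right _ _) (le_of_eq h0)) zero_le).symm
      · rename_i h0
        exact ENNReal.mul_div_cancel h0 ofReal_ne_top
    set π₁' := π.withDensity (fun z => g z.1) with hπ₁'def
    have hπ₁'le : π₁' ≤ π := aux_withDensity_le π (fun z => hg1 z.1)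
    haveI : IsFiniteMeasure π₁' :=
      ⟨lt_of_le_of_lt (hπ₁'le Set.univ) (measure_lt_top π _)⟩
    have hπ₁'fst : π₁'.map Prod.fst = volume.withDensity q := by
      rw [hπ₁'def, aux_map_withDensity_fst π hgm, hπfst, hμbardef, ← withDensity_mul _ hpbarm hgm]
      exact withDensity_congr_ae (Eventually.of_forall fun x => hmul x)
    set ν₁ := π₁'.map Prod.snd with hν₁def
    have hν₁le : ν₁ ≤ ρstar := by
      rw [hν₁def, ← hπsnd]; exact Measure.map_mono hπ₁'le measurable_snd
    haveI : IsFiniteMeasure ν₁ := ⟨lt_of_le_of_lt (hν₁le Set.univ) (measure_lt_top _ _)⟩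
    have hν₁univ : ν₁ Set.univ = ∫⁻ x, q x := by
      rw [hν₁def, aux_univ_snd, ← aux_univ_fst π₁', hπ₁'fst,
        withDensity_apply _ MeasurableSet.univ, Measure.restrict_univ]
    set A := ∫⁻ x, (pt x - pbar x) with hAdef
    have hq_plus : ∀ x, q x + (pt x - pbar x) = pt x := fun x => by
      rcases le_total (pt x) (pbar x) with hle | hle
      · rw [hqdef]; dsimp only; rw [min_eq_left hle, tsub_eq_zero_of_le hle, add_zero]
      · rw [hqdef]; dsimp only; rw [min_eq_right hle, add_tsub_cancel_of_le hle]
    have hsubm : Measurable (fun x => pt x - pbar x) := hptm.sub hpbarm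
    have hsum : (∫⁻ x, q x) + A = 1 := by
      rw [hAdef, ← lintegral_add_left hqm, ← hmasst]
      exact lintegral_congr fun x => hq_plus x
    have hqle1 : (∫⁻ x, q x) ≤ 1 := le_trans le_self_add hsum.le
    have hAle : A ≤ ENNReal.ofReal (D * ∫ x, h x) := by
      have hptb : ∀ᵐ x, pt x - pbar x ≤ ENNReal.ofReal (h x * D) := hkey.mono fun x hx => by
        rw [hptdef, hpbardef]
        dsimp only
        rw [tsub_le_iff_right, add_comm]
        exact le_trans (ENNReal.ofReal_le_ofReal hx) ENNReal.ofReal_add_le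
      calc A ≤ ∫⁻ x, ENNReal.ofReal (h x * D) := lintegral_mono_ae hptb
      _ = ENNReal.ofReal (∫ x, h x * D) :=
        (ofReal_integral_eq_lintegral_ofReal (hh.mul_const D)
          (Eventually.of_forall fun x => mul_nonneg (hhpos x) hD)).symm
      _ = ENNReal.ofReal (D * ∫ x, h x) := by rw [integral_mul_const, mul_comm]
    have hAne : A ≠ ⊤ := ne_top_of_le_ne_top ofReal_ne_top hAle
    set β := volume.withDensity (fun x => pt x - pbar x) with hβdef
    have hβuniv : β Set.univ = A := by
      rw [hβdef, withDensity_apply _ MeasurableSet.univ, Measure.restrict_univ, hAdef]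
    set νr := ρstar - ν₁ with hνrdef
    have hνruniv : νr Set.univ = A := by
      rw [hνrdef, Measure.sub_apply MeasurableSet.univ hν₁le, measure_univ, hν₁univ]
      refine ENNReal.sub_eq_of_eq_add (ne_top_of_le_ne_top one_ne_top hqle1) ?_
      rw [add_comm]; exact hsum.symm
    haveI : IsFiniteMeasure β := ⟨by rw [hβuniv]; exact lt_of_le_of_lt hAle ofReal_lt_top⟩
    haveI : IsFiniteMeasure νr :=
      ⟨lt_of_le_of_lt (Measure.sub_le Set.univ) (measure_lt_top ρstar _)⟩
    set π₂ := (A⁻¹ : ℝ≥0∞) • (β.prod νr) with hπ₂def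
    have hπ₂fst : π₂.map Prod.fst = β := by
      rw [hπ₂def, Measure.map_smul, Measure.map_fst_prod, hνruniv, smul_smul]
      rcases eq_or_ne A 0 with hA0 | hA0
      · have hβ0 : β = 0 := Measure.measure_univ_eq_zero.mp (hβuniv.trans hA0)
        simp [hβ0]
      · rw [ENNReal.inv_mul_cancel hA0 hAne, one_smul]
    have hπ₂snd : π₂.map Prod.snd = νr := by
      rw [hπ₂def, Measure.map_smul, Measure.map_snd_prod, hβuniv, smul_smul]
      rcases eq_or_ne A 0 with hA0 | hA0
      · have hνr0 : νr = 0 := Measure.measure_univ_eq_zero.mp (hνruniv.trans hA0)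
        simp [hνr0]
      · rw [ENNReal.inv_mul_cancel hA0 hAne, one_smul]
    haveI : IsFiniteMeasure π₂ := by
      constructor
      rw [← aux_univ_fst π₂, hπ₂fst, hβuniv]
      exact lt_of_le_of_lt hAle ofReal_lt_top
    have hπ₂univ : π₂ Set.univ = A := by rw [← aux_univ_fst π₂, hπ₂fst, hβuniv]
    have hβΩ : β Ωᶜ = 0 := aux_withDensity_null hΩm
      ((hsuppt.and hsuppbar).mono fun x hx hxn => by
        rw [hptdef, hpbardef]; dsimp only; rw [hx.1 hxn, hx.2 hxn]; simp)
    have hνrΩ : νr Ωᶜ = 0 :=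
      le_antisymm (le_trans (Measure.sub_le Ωᶜ) (le_of_eq hρstarsupp)) zero_le
    have hπ₂Ω := aux_marg_null hΩm hπ₂fst hπ₂snd hβΩ hνrΩ
    obtain ⟨hcint₂, hcnn₂, hcle₂⟩ := aux_cost_bound Ω hΩ c hc hcnonneg π₂ hπ₂Ω
    have hπ₁'Ω : π₁' ((Ω ×ˢ Ω)ᶜ) = 0 :=
      le_antisymm (le_trans (hπ₁'le _) hπΩ.le) zero_le
    obtain ⟨hcint₁', hcnn₁', _⟩ := aux_cost_bound Ω hΩ c hc hcnonneg π₁' hπ₁'Ω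
    set π' := π₁' + π₂ with hπ'def
    have hπ'fst : π'.map Prod.fst = μt := by
      rw [hπ'def, Measure.map_add _ _ measurable_fst, hπ₁'fst, hπ₂fst, hβdef,
        ← withDensity_add_right _ hsubm, hμtdef]
      exact withDensity_congr_ae (Eventually.of_forall fun x => hq_plus x)
    have hπ'snd : π'.map Prod.snd = ρstar := by
      rw [hπ'def, Measure.map_add _ _ measurable_snd, ← hν₁def, hπ₂snd, hνrdef, add_comm]
      exact Measure.sub_add_cancel_of_le hν₁le
    have hcost' : ∫ z, c z ∂π' = (∫ z, c z ∂π₁') + ∫ z, c z ∂π₂ := by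
      rw [hπ'def]; exact integral_add_measure hcint₁' hcint₂
    have hcost₁' : ∫ z, c z ∂π₁' ≤ ∫ z, c z ∂π :=
      integral_mono_measure hπ₁'le (Eventually.of_forall hcnonneg) hcintπ
    have hcost₂ : ∫ z, c z ∂π₂ ≤ M * (D * ∫ x, h x) := by
      refine le_trans hcle₂ ?_
      rw [hπ₂univ]
      exact mul_le_mul_of_nonneg_left
        (ENNReal.toReal_le_of_le_ofReal (mul_nonneg hD hHnn) hAle) hMnonneg
    have hmem : (∫ z, c z ∂π') ∈ S μt := ⟨π', hπ'fst, hπ'snd, rfl⟩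
    calc f θt = sInf (S μt) := by rw [hfS θt, hμt_eq]
    _ ≤ ∫ z, c z ∂π' := csInf_le (hBdd _) hmem
    _ = (∫ z, c z ∂π₁') + ∫ z, c z ∂π₂ := hcost'
    _ ≤ (a * rv₀ + b * rv₁) + M * (D * ∫ x, h x) := by
        refine add_le_add ?_ hcost₂
        rw [← hcostπ]; exact hcost₁'
  -- pass to infima
  have hfle : f θt ≤ a * f θ₀ + b * f θ₁ + M * (D * ∫ x, h x) := by
    have hf₀ : f θ₀ = sInf (S μ₀) := by rw [hfS θ₀, hμ₀def]
    have hf₁ : f θ₁ = sInf (S μ₁) := by rw [hfS θ₁, hμ₁def]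
    rw [hf₀, hf₁]
    refine le_of_forall_pos_le_add fun ε hε => ?_
    obtain ⟨rv₀, hrv₀S, hrv₀lt⟩ := Real.lt_sInf_add_pos hSne₀ hε
    obtain ⟨rv₁, hrv₁S, hrv₁lt⟩ := Real.lt_sInf_add_pos hSne₁ hε
    have hk := hKEY rv₀ hrv₀S rv₁ hrv₁S
    have h₀ : a * rv₀ ≤ a * (sInf (S μ₀) + ε) := mul_le_mul_of_nonneg_left hrv₀lt.le ha
    have h₁ : b * rv₁ ≤ b * (sInf (S μ₁) + ε) := mul_le_mul_of_nonneg_left hrv₁lt.le hb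
    have hε' : a * ε + b * ε = ε := by rw [← add_mul, hab, one_mul]
    have h₀' : a * (sInf (S μ₀) + ε) = a * sInf (S μ₀) + a * ε := by ring
    have h₁' : b * (sInf (S μ₁) + ε) = b * sInf (S μ₁) + b * ε := by ring
    linarith [hk, h₀, h₁]
  -- conclude
  have hMD : M * (D * ∫ x, h x) = C₀ * D := by rw [hC₀']; ring
  have hqid : C₀ * (a * (∑ i, θ₀ i ^ 2)) + C₀ * (b * (∑ i, θ₁ i ^ 2))
      - C₀ * (∑ i, θt i ^ 2) = 2 * (C₀ * D) := by
    rw [hDdef]; simp only [hQdef]; ring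
  rw [hMD] at hfle
  simp only [smul_eq_mul]
  linarith [hfle, hqid]
end

section
/- Let Ω = [0,4], p > 1, ρ(x,θ) = (0.5+θ)χ_{[0,1]}(x) + (0.5−θ)χ_{[2,3]}(x) and ρ*(y) = 0.5 χ_{[1,2]}(y) + 0.5 χ_{[3,4]}(y). Then the function g(θ) = W_p^p(ρ(·,θ), ρ*) is not differentiable at θ = 0: liminf_{θ→0+} (g(θ)−g(0))/θ ≥ 2^p + p − 1 while limsup_{θ→0−} (g(θ)−g(0))/θ ≤ p + 1, and 2^p + p − 1 > p + 1 for p > 1. -/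
open MeasureTheory Set Filter
open scoped NNReal ENNReal

/-- The density `ρ(x,θ) = (0.5+θ)·χ_{[0,1]}(x) + (0.5−θ)·χ_{[2,3]}(x)`. -/
noncomputable def rhoDens (θ : ℝ) : ℝ → ℝ :=
  fun x => (0.5 + θ) * Set.indicator (Icc (0 : ℝ) 1) (fun _ => (1 : ℝ)) x +
    (0.5 - θ) * Set.indicator (Icc (2 : ℝ) 3) (fun _ => (1 : ℝ)) x

/-- The reference density `ρ*(y) = 0.5·χ_{[1,2]}(y) + 0.5·χ_{[3,4]}(y)`. -/
noncomputable def rhoStarDens : ℝ → ℝ :=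
  fun y => 0.5 * Set.indicator (Icc (1 : ℝ) 2) (fun _ => (1 : ℝ)) y +
    0.5 * Set.indicator (Icc (3 : ℝ) 4) (fun _ => (1 : ℝ)) y

/-- `g(θ) = W_p^p(ρ(·,θ), ρ*)`, the `p`-th power Wasserstein cost. -/
noncomputable def gcost (p : ℝ) (θ : ℝ) : ℝ :=
  Tc (fun z : ℝ × ℝ => |z.1 - z.2| ^ p)
    (volume.withDensity fun x => ENNReal.ofReal (rhoDens θ x))
    (volume.withDensity fun y => ENNReal.ofReal (rhoStarDens y))

noncomputable def Mm (c : ℝ) (S : Set ℝ) : Measure ℝ :=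
  volume.withDensity (S.indicator fun _ => ENNReal.ofReal c)

lemma Mm_meas_dens (c : ℝ) {S : Set ℝ} (hS : MeasurableSet S) :
    Measurable (S.indicator fun _ : ℝ => ENNReal.ofReal c) :=
  (measurable_const).indicator hS

lemma Mm_apply (c : ℝ) {S T : Set ℝ} (hS : MeasurableSet S) (hT : MeasurableSet T) :
    Mm c S T = ENNReal.ofReal c * volume (S ∩ T) := by
  rw [Mm, withDensity_apply _ hT]
  rw [← lintegral_indicator hT]
  have : ∀ x, T.indicator (S.indicator fun _ => ENNReal.ofReal c) x
      = (S ∩ T).indicator (fun _ => ENNReal.ofReal c) x := by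
    intro x
    by_cases hx : x ∈ T <;> by_cases hx' : x ∈ S <;>
      simp [Set.indicator, hx, hx', Set.mem_inter_iff]
  rw [lintegral_congr this, lintegral_indicator (hS.inter hT), setLIntegral_const]
  try ring

lemma Mm_map_add (c a b k : ℝ) :
    (Mm c (Icc a b)).map (· + k) = Mm c (Icc (a + k) (b + k)) := by
  ext s hs
  rw [Measure.map_apply (measurable_add_const k) hs,
    Mm_apply c measurableSet_Icc ((measurable_add_const k) hs),
    Mm_apply c measurableSet_Icc hs]
  congr 1
  have : Icc a b ∩ (· + k) ⁻¹' s = (· + k) ⁻¹' (Icc (a + k) (b + k) ∩ s) := by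
    ext x
    simp only [Set.mem_inter_iff, Set.mem_preimage, Set.mem_Icc]
    constructor
    · rintro ⟨⟨h1, h2⟩, h3⟩; exact ⟨⟨by linarith, by linarith⟩, h3⟩
    · rintro ⟨⟨h1, h2⟩, h3⟩; exact ⟨⟨by linarith, by linarith⟩, h3⟩
  rw [this, measure_preimage_add_right]

lemma Mm_add {c d : ℝ} (hc : 0 ≤ c) (hd : 0 ≤ d) (S : Set ℝ) (hS : MeasurableSet S) :
    Mm c S + Mm d S = Mm (c + d) S := by
  rw [Mm, Mm, Mm, ← withDensity_add_left (Mm_meas_dens c hS)]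
  congr 1
  funext x
  by_cases hx : x ∈ S <;> simp [Set.indicator, hx, ENNReal.ofReal_add hc hd]

lemma Mm_univ (c a b : ℝ) : Mm c (Icc a b) univ = ENNReal.ofReal c * ENNReal.ofReal (b - a) := by
  rw [Mm_apply c measurableSet_Icc MeasurableSet.univ, Set.inter_univ, Real.volume_Icc]

instance Mm_finite (c a b : ℝ) : IsFiniteMeasure (Mm c (Icc a b)) := by
  constructor
  rw [Mm_univ]
  exact ENNReal.mul_lt_top ENNReal.ofReal_lt_top ENNReal.ofReal_lt_top

lemma pair_measurable (k : ℝ) : Measurable (fun x : ℝ => (x, x + k)) :=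
  measurable_id.prodMk (measurable_add_const k)

lemma Mm_pair_fst (c a b k : ℝ) :
    ((Mm c (Icc a b)).map (fun x => (x, x + k))).map Prod.fst = Mm c (Icc a b) := by
  rw [Measure.map_map measurable_fst (pair_measurable k)]
  have : (Prod.fst ∘ fun x : ℝ => (x, x + k)) = id := rfl
  rw [this, Measure.map_id]

lemma Mm_pair_snd (c a b k : ℝ) :
    ((Mm c (Icc a b)).map (fun x => (x, x + k))).map Prod.snd = Mm c (Icc (a + k) (b + k)) := by
  rw [Measure.map_map measurable_snd (pair_measurable k), ← Mm_map_add]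
  rfl

lemma cost_continuous {p : ℝ} (hp : 0 ≤ p) :
    Continuous (fun z : ℝ × ℝ => |z.1 - z.2| ^ p) := by
  apply Continuous.rpow_const
  · exact (continuous_fst.sub continuous_snd).abs
  · intro z; right; exact hp

lemma Mm_pair_cost (p : ℝ) (hp : 0 ≤ p) (c a b k : ℝ) :
    ∫ z, |z.1 - z.2| ^ p ∂((Mm c (Icc a b)).map (fun x => (x, x + k)))
      = |k| ^ p * ((Mm c (Icc a b)) univ).toReal := by
  rw [integral_map (pair_measurable k).aemeasurable
    (cost_continuous hp).aestronglyMeasurable]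
  have : ∀ x : ℝ, |x - (x + k)| ^ p = |k| ^ p := by
    intro x
    congr 1
    rw [abs_sub_comm]
    ring_nf
  simp only [this]
  rw [integral_const]
  simp [mul_comm, Measure.real]

lemma Mm_integral (φ : ℝ → ℝ) (hφ : Measurable φ) {c : ℝ} (hc : 0 ≤ c) {S : Set ℝ}
    (hS : MeasurableSet S) :
    ∫ x, φ x ∂(Mm c S) = c * ∫ x in S, φ x := by
  have h1 : Mm c S
      = volume.withDensity (fun x => ((S.indicator (fun _ => c.toNNReal) x : ℝ≥0) : ℝ≥0∞)) := by
    rw [Mm]; congr 1; funext x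
    by_cases hx : x ∈ S <;> simp [Set.indicator, hx, ENNReal.ofReal]
  rw [h1, integral_withDensity_eq_integral_smul (measurable_const.indicator hS)]
  have h2 : ∀ x, (S.indicator (fun _ => c.toNNReal) x : ℝ≥0) • φ x
      = S.indicator (fun y => c * φ y) x := by
    intro x
    by_cases hx : x ∈ S <;>
      simp [Set.indicator, hx, NNReal.smul_def, Real.coe_toNNReal _ hc]
  rw [integral_congr_ae (Filter.Eventually.of_forall h2), integral_indicator hS,
    MeasureTheory.integral_const_mul]

noncomputable def phiAux (p δ : ℝ) : ℝ → ℝ := fun x =>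
  if x ∈ Icc (0:ℝ) 1 then -p * x + δ else if x ∈ Icc (2:ℝ) 3 then -p * x else 0

noncomputable def psiAux (p δ : ℝ) : ℝ → ℝ := fun y =>
  if y ∈ Icc (1:ℝ) 2 then p * y + (1 - p - δ) else if y ∈ Icc (3:ℝ) 4 then p * y + (1 - p) else 0

lemma phiAux_measurable (p δ : ℝ) : Measurable (phiAux p δ) := by
  unfold phiAux
  apply Measurable.ite measurableSet_Icc
  · exact (measurable_id.const_mul (-p)).add_const δ
  · exact Measurable.ite measurableSet_Icc (measurable_id.const_mul (-p)) measurable_const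

lemma bern {p : ℝ} (hp : 1 ≤ p) {u : ℝ} (hu : 0 ≤ u) : 1 + p * (u - 1) ≤ u ^ p := by
  have h := one_add_mul_self_le_rpow_one_add (s := u - 1) (by linarith) hp
  have : 1 + (u - 1) = u := by ring
  rwa [this] at h

lemma two_le_two_rpow {p : ℝ} (hp : 1 ≤ p) : (2:ℝ) ≤ 2 ^ p := by
  calc (2:ℝ) = 2 ^ (1:ℝ) := (Real.rpow_one 2).symm
  _ ≤ 2 ^ p := Real.rpow_le_rpow_of_exponent_le (by norm_num) hp

lemma key2 {p : ℝ} (hp : 1 < p) {u : ℝ} (hu : 2 ≤ u) : p * u + (2:ℝ) ^ p - 2 * p ≤ u ^ p := by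
  set t := u / 2 with ht
  have ht1 : 1 ≤ t := by rw [ht]; linarith
  have htu : u = 2 * t := by rw [ht]; ring
  have h1 : (1:ℝ) + p * (t - 1) ≤ t ^ p := bern hp.le (by linarith)
  have h2 : u ^ p = 2 ^ p * t ^ p := by
    rw [htu, Real.mul_rpow (by norm_num) (by linarith)]
  have h3 : (2:ℝ) ^ p * (1 + p * (t - 1)) ≤ 2 ^ p * t ^ p := by
    apply mul_le_mul_of_nonneg_left h1 (Real.rpow_nonneg (by norm_num) p)
  have h4 : (2:ℝ) * (p * (t - 1)) ≤ 2 ^ p * (p * (t - 1)) := by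
    apply mul_le_mul_of_nonneg_right (two_le_two_rpow hp.le)
    have : (0:ℝ) ≤ t - 1 := by linarith
    positivity
  rw [h2]
  nlinarith [h3, h4]

lemma feas {p δ : ℝ} (hp : 1 < p) (hδl : 1 - p ≤ δ) (hδu : δ ≤ (2:ℝ) ^ p - p - 1)
    {x y : ℝ} (hx : x ∈ Icc (0:ℝ) 1 ∪ Icc (2:ℝ) 3) (hy : y ∈ Icc (1:ℝ) 2 ∪ Icc (3:ℝ) 4) :
    phiAux p δ x + psiAux p δ y ≤ |x - y| ^ p := by
  have hp0 : (0:ℝ) < p := by linarith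
  rcases hx with hx | hx
  · rw [phiAux, if_pos hx]
    rcases hy with hy | hy
    · rw [psiAux, if_pos hy]
      have hu : 0 ≤ y - x := by
        rcases hx with ⟨_, hx2⟩; rcases hy with ⟨hy1, _⟩; linarith
      have habs : |x - y| = y - x := by rw [abs_sub_comm]; exact abs_of_nonneg hu
      rw [habs]
      have := bern hp.le hu
      nlinarith [this]
    · have hy' : y ∉ Icc (1:ℝ) 2 := by
        rcases hy with ⟨hy1, _⟩; intro h; rcases h with ⟨_, h2⟩; linarith
      rw [psiAux, if_neg hy', if_pos hy]
      have hu : 2 ≤ y - x := by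
        rcases hx with ⟨_, hx2⟩; rcases hy with ⟨hy1, _⟩; linarith
      have habs : |x - y| = y - x := by rw [abs_sub_comm]; exact abs_of_nonneg (by linarith)
      rw [habs]
      have := key2 hp hu
      nlinarith [this]
  · have hx' : x ∉ Icc (0:ℝ) 1 := by
      rcases hx with ⟨hx1, _⟩; intro h; rcases h with ⟨_, h2⟩; linarith
    rw [phiAux, if_neg hx', if_pos hx]
    rcases hy with hy | hy
    · rw [psiAux, if_pos hy]
      have hu : 0 ≤ x - y := by
        rcases hx with ⟨hx1, _⟩; rcases hy with ⟨_, hy2⟩; linarith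
      have h0 : (0:ℝ) ≤ |x - y| ^ p := Real.rpow_nonneg (abs_nonneg _) p
      nlinarith [h0, mul_nonneg hp0.le hu]
    · have hy' : y ∉ Icc (1:ℝ) 2 := by
        rcases hy with ⟨hy1, _⟩; intro h; rcases h with ⟨_, h2⟩; linarith
      rw [psiAux, if_neg hy', if_pos hy]
      have hu : 0 ≤ y - x := by
        rcases hx with ⟨_, hx2⟩; rcases hy with ⟨hy1, _⟩; linarith
      have habs : |x - y| = y - x := by rw [abs_sub_comm]; exact abs_of_nonneg hu
      rw [habs]
      have := bern hp.le hu
      nlinarith [this]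

lemma Mm_add_measure (c d : ℝ) {S T : Set ℝ} (hS : MeasurableSet S) :
    Mm c S + Mm d T
      = volume.withDensity
        (fun x => S.indicator (fun _ => ENNReal.ofReal c) x
          + T.indicator (fun _ => ENNReal.ofReal d) x) := by
  rw [Mm, Mm, ← withDensity_add_left (Mm_meas_dens c hS)]
  rfl

lemma disj01_23 : ∀ x : ℝ, x ∈ Icc (0:ℝ) 1 → x ∈ Icc (2:ℝ) 3 → False := by
  rintro x ⟨_, h1⟩ ⟨h2, _⟩; linarith

lemma disj12_34 : ∀ x : ℝ, x ∈ Icc (1:ℝ) 2 → x ∈ Icc (3:ℝ) 4 → False := by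
  rintro x ⟨_, h1⟩ ⟨h2, _⟩; linarith

lemma mu_eq (θ : ℝ) :
    volume.withDensity (fun x => ENNReal.ofReal (rhoDens θ x))
      = Mm (0.5 + θ) (Icc 0 1) + Mm (0.5 - θ) (Icc 2 3) := by
  rw [Mm_add_measure _ _ measurableSet_Icc]
  congr 1
  funext x
  rw [rhoDens]
  by_cases h1 : x ∈ Icc (0:ℝ) 1
  · have h2 : x ∉ Icc (2:ℝ) 3 := fun h => disj01_23 x h1 h
    simp [Set.indicator, h1, h2]
  · by_cases h2 : x ∈ Icc (2:ℝ) 3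
    · simp [Set.indicator, h1, h2]
    · simp [Set.indicator, h1, h2]

lemma nu_eq :
    volume.withDensity (fun y => ENNReal.ofReal (rhoStarDens y))
      = Mm 0.5 (Icc 1 2) + Mm 0.5 (Icc 3 4) := by
  rw [Mm_add_measure _ _ measurableSet_Icc]
  congr 1
  funext y
  rw [rhoStarDens]
  by_cases h1 : y ∈ Icc (1:ℝ) 2
  · have h2 : y ∉ Icc (3:ℝ) 4 := fun h => disj12_34 y h1 h
    simp [Set.indicator, h1, h2]
  · by_cases h2 : y ∈ Icc (3:ℝ) 4
    · simp [Set.indicator, h1, h2]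
    · simp [Set.indicator, h1, h2]

lemma phiAux_bound {p δ : ℝ} (hp : 1 < p) (x : ℝ) : |phiAux p δ x| ≤ 3 * p + |δ| := by
  have hδ1 : -|δ| ≤ δ := neg_abs_le δ
  have hδ2 : δ ≤ |δ| := le_abs_self δ
  rw [phiAux]
  split_ifs with h1 h2
  · rcases h1 with ⟨ha, hb⟩
    rw [abs_le]
    constructor <;> nlinarith
  · rcases h2 with ⟨ha, hb⟩
    rw [abs_le]
    constructor <;> nlinarith [abs_nonneg δ]
  · rw [abs_zero]; nlinarith [abs_nonneg δ]

lemma psiAux_bound {p δ : ℝ} (hp : 1 < p) (y : ℝ) :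
    |psiAux p δ y| ≤ 5 * p + 1 + |δ| := by
  have hδ1 : -|δ| ≤ δ := neg_abs_le δ
  have hδ2 : δ ≤ |δ| := le_abs_self δ
  rw [psiAux]
  split_ifs with h1 h2
  · rcases h1 with ⟨ha, hb⟩
    rw [abs_le]
    constructor <;> nlinarith
  · rcases h2 with ⟨ha, hb⟩
    rw [abs_le]
    constructor <;> nlinarith [abs_nonneg δ]
  · rw [abs_zero]; nlinarith [abs_nonneg δ]

lemma psiAux_measurable (p δ : ℝ) : Measurable (psiAux p δ) := by
  unfold psiAux
  apply Measurable.ite measurableSet_Icc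
  · exact (measurable_id.const_mul p).add_const _
  · exact Measurable.ite measurableSet_Icc ((measurable_id.const_mul p).add_const _)
      measurable_const

lemma affine_int (m q a b : ℝ) :
    ∫ x in a..b, (m * x + q) = m * (b ^ 2 - a ^ 2) / 2 + q * (b - a) := by
  have h1 : IntervalIntegrable (fun x : ℝ => m * x) volume a b :=
    (continuous_const.mul continuous_id).intervalIntegrable a b
  have h2 : IntervalIntegrable (fun _ : ℝ => q) volume a b := intervalIntegrable_const
  rw [intervalIntegral.integral_add h1 h2, intervalIntegral.integral_const_mul,
    integral_id, intervalIntegral.integral_const, smul_eq_mul]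
  ring

lemma Icc_affine_int (m q a b : ℝ) (hab : a ≤ b) :
    ∫ x in Icc a b, (m * x + q) = m * (b ^ 2 - a ^ 2) / 2 + q * (b - a) := by
  rw [integral_Icc_eq_integral_Ioc, ← intervalIntegral.integral_of_le hab, affine_int]

lemma phi_int_01 (p δ : ℝ) : ∫ x in Icc (0:ℝ) 1, phiAux p δ x = δ - p / 2 := by
  rw [setIntegral_congr_fun measurableSet_Icc
    (fun x hx => by rw [phiAux, if_pos hx] : EqOn (phiAux p δ) (fun x => -p * x + δ) (Icc 0 1))]
  rw [Icc_affine_int (-p) δ 0 1 (by norm_num)]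
  ring

lemma phi_int_23 (p δ : ℝ) : ∫ x in Icc (2:ℝ) 3, phiAux p δ x = -(5 * p) / 2 := by
  have he : EqOn (phiAux p δ) (fun x => -p * x + 0) (Icc (2:ℝ) 3) := by
    intro x hx
    have h1 : x ∉ Icc (0:ℝ) 1 := fun h => disj01_23 x h hx
    rw [phiAux]
    simp only [if_neg h1, if_pos hx]
    ring
  rw [setIntegral_congr_fun measurableSet_Icc he, Icc_affine_int (-p) 0 2 3 (by norm_num)]
  ring

lemma psi_int_12 (p δ : ℝ) : ∫ y in Icc (1:ℝ) 2, psiAux p δ y = 3 * p / 2 + (1 - p - δ) := by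
  rw [setIntegral_congr_fun measurableSet_Icc
    (fun y hy => by rw [psiAux, if_pos hy] :
      EqOn (psiAux p δ) (fun y => p * y + (1 - p - δ)) (Icc 1 2))]
  rw [Icc_affine_int p (1 - p - δ) 1 2 (by norm_num)]
  ring

lemma psi_int_34 (p δ : ℝ) : ∫ y in Icc (3:ℝ) 4, psiAux p δ y = 7 * p / 2 + (1 - p) := by
  have he : EqOn (psiAux p δ) (fun y => p * y + (1 - p)) (Icc (3:ℝ) 4) := by
    intro y hy
    have h1 : y ∉ Icc (1:ℝ) 2 := fun h => disj12_34 y h hy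
    rw [psiAux, if_neg h1, if_pos hy]
  rw [setIntegral_congr_fun measurableSet_Icc he, Icc_affine_int p (1 - p) 3 4 (by norm_num)]
  ring

lemma integrable_of_bound {α : Type*} [MeasurableSpace α] (μ : Measure α) [IsFiniteMeasure μ]
    {f : α → ℝ} (hf : AEStronglyMeasurable f μ) (C : ℝ) (h : ∀ x, |f x| ≤ C) :
    Integrable f μ :=
  Integrable.mono' (integrable_const C) hf
    (ae_of_all _ (by simpa [Real.norm_eq_abs] using h))

lemma mu_univ {θ : ℝ} (hθ1 : -(1/2) ≤ θ) (hθ2 : θ ≤ 1/2) :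
    (Mm (0.5 + θ) (Icc 0 1) + Mm (0.5 - θ) (Icc 2 3)) univ = 1 := by
  rw [Measure.add_apply, Mm_univ, Mm_univ]
  norm_num
  rw [← ENNReal.ofReal_add (by linarith) (by linarith)]
  norm_num

lemma nu_univ : (Mm 0.5 (Icc 1 2) + Mm 0.5 (Icc 3 4)) univ = 1 := by
  rw [Measure.add_apply, Mm_univ, Mm_univ]
  norm_num
  rw [← ENNReal.ofReal_add (by norm_num) (by norm_num)]
  norm_num

lemma dual_lb {p δ : ℝ} (hp : 1 < p) (hδl : 1 - p ≤ δ) (hδu : δ ≤ (2:ℝ) ^ p - p - 1)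
    {θ : ℝ} (hθ1 : -(1/2) ≤ θ) (hθ2 : θ ≤ 1/2) :
    1 + (2 * p + δ) * θ ≤ gcost p θ := by
  have hp0 : (0:ℝ) < p := by linarith
  set A : Set ℝ := Icc 0 1 ∪ Icc 2 3 with hA
  set B : Set ℝ := Icc 1 2 ∪ Icc 3 4 with hB
  set μ : Measure ℝ := Mm (0.5 + θ) (Icc 0 1) + Mm (0.5 - θ) (Icc 2 3) with hμ
  set ν : Measure ℝ := Mm 0.5 (Icc 1 2) + Mm 0.5 (Icc 3 4) with hν
  have hμuniv : μ univ = 1 := mu_univ hθ1 hθ2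
  have hνuniv : ν univ = 1 := nu_univ
  haveI : IsFiniteMeasure μ := ⟨by rw [hμuniv]; exact ENNReal.one_lt_top⟩
  haveI : IsFiniteMeasure ν := ⟨by rw [hνuniv]; exact ENNReal.one_lt_top⟩
  have hμA : μ Aᶜ = 0 := by
    rw [hμ, Measure.add_apply, Mm_apply _ measurableSet_Icc
      (measurableSet_Icc.union measurableSet_Icc).compl,
      Mm_apply _ measurableSet_Icc (measurableSet_Icc.union measurableSet_Icc).compl]
    have e1 : Icc (0:ℝ) 1 ∩ Aᶜ = ∅ := by
      rw [Set.eq_empty_iff_forall_notMem]; rintro x ⟨h1, h2⟩; exact h2 (Or.inl h1)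
    have e2 : Icc (2:ℝ) 3 ∩ Aᶜ = ∅ := by
      rw [Set.eq_empty_iff_forall_notMem]; rintro x ⟨h1, h2⟩; exact h2 (Or.inr h1)
    rw [e1, e2]; simp
  have hνB : ν Bᶜ = 0 := by
    rw [hν, Measure.add_apply, Mm_apply _ measurableSet_Icc
      (measurableSet_Icc.union measurableSet_Icc).compl,
      Mm_apply _ measurableSet_Icc (measurableSet_Icc.union measurableSet_Icc).compl]
    have e1 : Icc (1:ℝ) 2 ∩ Bᶜ = ∅ := by
      rw [Set.eq_empty_iff_forall_notMem]; rintro x ⟨h1, h2⟩; exact h2 (Or.inl h1)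
    have e2 : Icc (3:ℝ) 4 ∩ Bᶜ = ∅ := by
      rw [Set.eq_empty_iff_forall_notMem]; rintro x ⟨h1, h2⟩; exact h2 (Or.inr h1)
    rw [e1, e2]; simp
  rw [gcost, mu_eq, nu_eq, ← hμ, ← hν]
  apply le_csInf
  · refine ⟨∫ z, |z.1 - z.2| ^ p ∂(μ.prod ν), μ.prod ν, ?_, ?_, rfl⟩
    · rw [Measure.map_fst_prod, hνuniv, one_smul]
    · rw [Measure.map_snd_prod, hμuniv, one_smul]
  rintro r ⟨π, hfst, hsnd, rfl⟩
  haveI : IsFiniteMeasure π := by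
    constructor
    have : π univ = μ univ := by
      rw [← hfst, Measure.map_apply measurable_fst MeasurableSet.univ]
      rfl
    rw [this, hμuniv]; exact ENNReal.one_lt_top
  have hπA : π (Prod.fst ⁻¹' Aᶜ) = 0 := by
    rw [← Measure.map_apply measurable_fst
      (measurableSet_Icc.union measurableSet_Icc).compl, hfst]
    exact hμA
  have hπB : π (Prod.snd ⁻¹' Bᶜ) = 0 := by
    rw [← Measure.map_apply measurable_snd
      (measurableSet_Icc.union measurableSet_Icc).compl, hsnd]
    exact hνB
  have hmem : ∀ᵐ z : ℝ × ℝ ∂π, z.1 ∈ A ∧ z.2 ∈ B := by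
    have h1 : ∀ᵐ z : ℝ × ℝ ∂π, z.1 ∈ A := by
      rw [ae_iff]
      convert hπA using 2
      exact rfl
    have h2 : ∀ᵐ z : ℝ × ℝ ∂π, z.2 ∈ B := by
      rw [ae_iff]
      convert hπB using 2
      exact rfl
    exact h1.and h2
  -- pointwise inequality a.e.
  have hle : ∀ᵐ z : ℝ × ℝ ∂π, phiAux p δ z.1 + psiAux p δ z.2 ≤ |z.1 - z.2| ^ p := by
    filter_upwards [hmem] with z hz
    exact feas hp hδl hδu hz.1 hz.2
  -- integrability of the cost
  have hcost_bd : ∀ᵐ z : ℝ × ℝ ∂π, ‖|z.1 - z.2| ^ p‖ ≤ (4:ℝ) ^ p := by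
    filter_upwards [hmem] with z hz
    rw [Real.norm_eq_abs, abs_of_nonneg (Real.rpow_nonneg (abs_nonneg _) p)]
    apply Real.rpow_le_rpow (abs_nonneg _) _ hp0.le
    rcases hz with ⟨hz1, hz2⟩
    have hx : z.1 ∈ Icc (0:ℝ) 3 := by
      rcases hz1 with h | h <;> rcases h with ⟨h1, h2⟩ <;> constructor <;> linarith
    have hy : z.2 ∈ Icc (1:ℝ) 4 := by
      rcases hz2 with h | h <;> rcases h with ⟨h1, h2⟩ <;> constructor <;> linarith
    rw [abs_le]
    rcases hx with ⟨_, _⟩; rcases hy with ⟨_, _⟩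
    constructor <;> linarith
  have hcost_int : Integrable (fun z : ℝ × ℝ => |z.1 - z.2| ^ p) π :=
    Integrable.mono' (integrable_const _) (cost_continuous hp0.le).aestronglyMeasurable hcost_bd
  have hφf_int : Integrable (fun z : ℝ × ℝ => phiAux p δ z.1) π :=
    integrable_of_bound π ((phiAux_measurable p δ).comp measurable_fst).aestronglyMeasurable
      (3 * p + |δ|) (fun z => phiAux_bound hp z.1)
  have hψs_int : Integrable (fun z : ℝ × ℝ => psiAux p δ z.2) π :=
    integrable_of_bound π ((psiAux_measurable p δ).comp measurable_snd).aestronglyMeasurable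
      (5 * p + 1 + |δ|) (fun z => psiAux_bound hp z.2)
  have step1 : ∫ z : ℝ × ℝ, (phiAux p δ z.1 + psiAux p δ z.2) ∂π
      ≤ ∫ z : ℝ × ℝ, |z.1 - z.2| ^ p ∂π :=
    integral_mono_ae (hφf_int.add hψs_int) hcost_int hle
  have step2 : ∫ z : ℝ × ℝ, (phiAux p δ z.1 + psiAux p δ z.2) ∂π
      = ∫ x, phiAux p δ x ∂μ + ∫ y, psiAux p δ y ∂ν := by
    rw [integral_add hφf_int hψs_int, ← hfst, ← hsnd,
      integral_map measurable_fst.aemeasurable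
        (phiAux_measurable p δ).aestronglyMeasurable,
      integral_map measurable_snd.aemeasurable
        (psiAux_measurable p δ).aestronglyMeasurable]
  have hint1 : Integrable (phiAux p δ) (Mm (0.5 + θ) (Icc 0 1)) :=
    integrable_of_bound _ (phiAux_measurable p δ).aestronglyMeasurable _
      (fun x => phiAux_bound hp x)
  have hint2 : Integrable (phiAux p δ) (Mm (0.5 - θ) (Icc 2 3)) :=
    integrable_of_bound _ (phiAux_measurable p δ).aestronglyMeasurable _
      (fun x => phiAux_bound hp x)
  have hint3 : Integrable (psiAux p δ) (Mm 0.5 (Icc 1 2)) :=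
    integrable_of_bound _ (psiAux_measurable p δ).aestronglyMeasurable _
      (fun y => psiAux_bound hp y)
  have hint4 : Integrable (psiAux p δ) (Mm 0.5 (Icc 3 4)) :=
    integrable_of_bound _ (psiAux_measurable p δ).aestronglyMeasurable _
      (fun y => psiAux_bound hp y)
  have hvalφ : ∫ x, phiAux p δ x ∂μ
      = (0.5 + θ) * (δ - p / 2) + (0.5 - θ) * (-(5 * p) / 2) := by
    rw [hμ, integral_add_measure hint1 hint2,
      Mm_integral _ (phiAux_measurable p δ) (by linarith) measurableSet_Icc,
      Mm_integral _ (phiAux_measurable p δ) (by linarith) measurableSet_Icc,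
      phi_int_01, phi_int_23]
  have hvalψ : ∫ y, psiAux p δ y ∂ν
      = 0.5 * (3 * p / 2 + (1 - p - δ)) + 0.5 * (7 * p / 2 + (1 - p)) := by
    rw [hν, integral_add_measure hint3 hint4,
      Mm_integral _ (psiAux_measurable p δ) (by norm_num) measurableSet_Icc,
      Mm_integral _ (psiAux_measurable p δ) (by norm_num) measurableSet_Icc,
      psi_int_12, psi_int_34]
  have : 1 + (2 * p + δ) * θ
      = (0.5 + θ) * (δ - p / 2) + (0.5 - θ) * (-(5 * p) / 2)
        + (0.5 * (3 * p / 2 + (1 - p - δ)) + 0.5 * (7 * p / 2 + (1 - p))) := by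
    ring
  rw [this, ← hvalφ, ← hvalψ]
  calc ∫ x, phiAux p δ x ∂μ + ∫ y, psiAux p δ y ∂ν
      = ∫ z : ℝ × ℝ, (phiAux p δ z.1 + psiAux p δ z.2) ∂π := step2.symm
  _ ≤ _ := step1

lemma Mm_pair_finite (c a b k : ℝ) :
    IsFiniteMeasure ((Mm c (Icc a b)).map (fun x => (x, x + k))) := by
  constructor
  rw [Measure.map_apply (pair_measurable k) MeasurableSet.univ]
  exact measure_lt_top _ _

lemma cost_integrable_pair {p : ℝ} (hp : 0 ≤ p) (c a b k : ℝ) :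
    Integrable (fun z : ℝ × ℝ => |z.1 - z.2| ^ p)
      ((Mm c (Icc a b)).map (fun x => (x, x + k))) := by
  haveI := Mm_pair_finite c a b k
  rw [integrable_map_measure (cost_continuous hp).aestronglyMeasurable
    (pair_measurable k).aemeasurable]
  have : ((fun z : ℝ × ℝ => |z.1 - z.2| ^ p) ∘ fun x => (x, x + k))
      = fun _ : ℝ => |k| ^ p := by
    funext x
    simp only [Function.comp]
    congr 1
    rw [abs_sub_comm]
    ring_nf
  rw [this]
  exact integrable_const _

lemma Mm_mass_toReal {c : ℝ} (hc : 0 ≤ c) {a b : ℝ} (hab : a ≤ b) :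
    ((Mm c (Icc a b)) univ).toReal = c * (b - a) := by
  rw [Mm_univ, ENNReal.toReal_mul, ENNReal.toReal_ofReal hc,
    ENNReal.toReal_ofReal (by linarith)]

lemma gcost_le (p θ : ℝ) (hp : 0 ≤ p) (π : Measure (ℝ × ℝ))
    (hfst : π.map Prod.fst = volume.withDensity fun x => ENNReal.ofReal (rhoDens θ x))
    (hsnd : π.map Prod.snd = volume.withDensity fun y => ENNReal.ofReal (rhoStarDens y)) :
    gcost p θ ≤ ∫ z : ℝ × ℝ, |z.1 - z.2| ^ p ∂π := by
  apply csInf_le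
  · refine ⟨0, ?_⟩
    rintro r ⟨π', _, _, rfl⟩
    exact integral_nonneg fun z => Real.rpow_nonneg (abs_nonneg _) p
  · exact ⟨π, hfst, hsnd, rfl⟩

lemma gcost_zero_le (p : ℝ) (hp : 0 ≤ p) : gcost p 0 ≤ 1 := by
  set π : Measure (ℝ × ℝ) :=
    (Mm 0.5 (Icc 0 1)).map (fun x => (x, x + 1))
      + (Mm 0.5 (Icc 2 3)).map (fun x => (x, x + 1)) with hπ
  have hfst : π.map Prod.fst = volume.withDensity fun x => ENNReal.ofReal (rhoDens 0 x) := by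
    rw [hπ, Measure.map_add _ _ measurable_fst, Mm_pair_fst, Mm_pair_fst, mu_eq]
    norm_num
  have hsnd : π.map Prod.snd = volume.withDensity fun y => ENNReal.ofReal (rhoStarDens y) := by
    rw [hπ, Measure.map_add _ _ measurable_snd, Mm_pair_snd, Mm_pair_snd, nu_eq]
    norm_num
  have hcost : ∫ z : ℝ × ℝ, |z.1 - z.2| ^ p ∂π = 1 := by
    rw [hπ, integral_add_measure (cost_integrable_pair hp _ _ _ _)
      (cost_integrable_pair hp _ _ _ _), Mm_pair_cost p hp, Mm_pair_cost p hp,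
      Mm_mass_toReal (by norm_num) (by norm_num : (0:ℝ) ≤ 1),
      Mm_mass_toReal (by norm_num) (by norm_num : (2:ℝ) ≤ 3)]
    norm_num
  calc gcost p 0 ≤ ∫ z : ℝ × ℝ, |z.1 - z.2| ^ p ∂π := gcost_le p 0 hp π hfst hsnd
  _ = 1 := hcost

lemma gcost_pos_le {p : ℝ} (hp : 0 ≤ p) {θ : ℝ} (hθ1 : 0 ≤ θ) (hθ2 : θ ≤ 1/2) :
    gcost p θ ≤ 1 + ((3:ℝ) ^ p - 1) * θ := by
  set π : Measure (ℝ × ℝ) :=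
    (Mm 0.5 (Icc 0 1)).map (fun x => (x, x + 1))
      + (Mm θ (Icc 0 1)).map (fun x => (x, x + 3))
      + (Mm (0.5 - θ) (Icc 2 3)).map (fun x => (x, x + 1)) with hπ
  have hfst : π.map Prod.fst = volume.withDensity fun x => ENNReal.ofReal (rhoDens θ x) := by
    rw [hπ, Measure.map_add _ _ measurable_fst, Measure.map_add _ _ measurable_fst,
      Mm_pair_fst, Mm_pair_fst, Mm_pair_fst, mu_eq,
      Mm_add (by norm_num) hθ1 _ measurableSet_Icc]
  have hsnd : π.map Prod.snd = volume.withDensity fun y => ENNReal.ofReal (rhoStarDens y) := by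
    rw [hπ, Measure.map_add _ _ measurable_snd, Measure.map_add _ _ measurable_snd,
      Mm_pair_snd, Mm_pair_snd, Mm_pair_snd, nu_eq]
    have e1 : Icc (0+1 : ℝ) (1+1) = Icc (1:ℝ) 2 := by norm_num
    have e2 : Icc (0+3 : ℝ) (1+3) = Icc (3:ℝ) 4 := by norm_num
    have e3 : Icc (2+1 : ℝ) (3+1) = Icc (3:ℝ) 4 := by norm_num
    rw [e1, e2, e3, add_assoc, Mm_add hθ1 (by linarith) _ measurableSet_Icc]
    have : θ + (0.5 - θ) = 0.5 := by ring
    rw [this]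
  have hcost : ∫ z : ℝ × ℝ, |z.1 - z.2| ^ p ∂π = 1 + ((3:ℝ) ^ p - 1) * θ := by
    rw [hπ, integral_add_measure ((cost_integrable_pair hp _ _ _ _).add_measure
      (cost_integrable_pair hp _ _ _ _)) (cost_integrable_pair hp _ _ _ _),
      integral_add_measure (cost_integrable_pair hp _ _ _ _)
      (cost_integrable_pair hp _ _ _ _),
      Mm_pair_cost p hp, Mm_pair_cost p hp, Mm_pair_cost p hp,
      Mm_mass_toReal (by norm_num) (by norm_num : (0:ℝ) ≤ 1),
      Mm_mass_toReal hθ1 (by norm_num : (0:ℝ) ≤ 1),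
      Mm_mass_toReal (by linarith) (by norm_num : (2:ℝ) ≤ 3)]
    have h1 : |(1:ℝ)| ^ p = 1 := by rw [abs_one, Real.one_rpow]
    have h3 : |(3:ℝ)| ^ p = 3 ^ p := by rw [abs_of_nonneg (by norm_num : (0:ℝ) ≤ 3)]
    rw [h1, h3]
    ring
  calc gcost p θ ≤ ∫ z : ℝ × ℝ, |z.1 - z.2| ^ p ∂π := gcost_le p θ hp π hfst hsnd
  _ = _ := hcost

lemma gcost_neg_le {p : ℝ} (hp : 0 ≤ p) {θ : ℝ} (hθ1 : -(1/2) ≤ θ) (hθ2 : θ ≤ 0) :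
    gcost p θ ≤ 1 := by
  set π : Measure (ℝ × ℝ) :=
    (Mm (0.5 + θ) (Icc 0 1)).map (fun x => (x, x + 1))
      + (Mm (-θ) (Icc 2 3)).map (fun x => (x, x + (-1)))
      + (Mm 0.5 (Icc 2 3)).map (fun x => (x, x + 1)) with hπ
  have hfst : π.map Prod.fst = volume.withDensity fun x => ENNReal.ofReal (rhoDens θ x) := by
    rw [hπ, Measure.map_add _ _ measurable_fst, Measure.map_add _ _ measurable_fst,
      Mm_pair_fst, Mm_pair_fst, Mm_pair_fst, mu_eq, add_assoc,
      Mm_add (by linarith) (by norm_num) _ measurableSet_Icc]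
    have : -θ + 0.5 = 0.5 - θ := by ring
    rw [this]
  have hsnd : π.map Prod.snd = volume.withDensity fun y => ENNReal.ofReal (rhoStarDens y) := by
    rw [hπ, Measure.map_add _ _ measurable_snd, Measure.map_add _ _ measurable_snd,
      Mm_pair_snd, Mm_pair_snd, Mm_pair_snd, nu_eq]
    have e1 : Icc (0+1 : ℝ) (1+1) = Icc (1:ℝ) 2 := by norm_num
    have e2 : Icc (2+(-1) : ℝ) (3+(-1)) = Icc (1:ℝ) 2 := by norm_num
    have e3 : Icc (2+1 : ℝ) (3+1) = Icc (3:ℝ) 4 := by norm_num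
    rw [e1, e2, e3, Mm_add (by linarith) (by linarith) _ measurableSet_Icc]
    have : 0.5 + θ + -θ = 0.5 := by ring
    rw [this]
  have hcost : ∫ z : ℝ × ℝ, |z.1 - z.2| ^ p ∂π = 1 := by
    rw [hπ, integral_add_measure ((cost_integrable_pair hp _ _ _ _).add_measure
      (cost_integrable_pair hp _ _ _ _)) (cost_integrable_pair hp _ _ _ _),
      integral_add_measure (cost_integrable_pair hp _ _ _ _)
      (cost_integrable_pair hp _ _ _ _),
      Mm_pair_cost p hp, Mm_pair_cost p hp, Mm_pair_cost p hp,
      Mm_mass_toReal (by linarith) (by norm_num : (0:ℝ) ≤ 1),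
      Mm_mass_toReal (by linarith) (by norm_num : (2:ℝ) ≤ 3),
      Mm_mass_toReal (by norm_num) (by norm_num : (2:ℝ) ≤ 3)]
    have h1 : |(1:ℝ)| ^ p = 1 := by rw [abs_one, Real.one_rpow]
    have h2 : |(-1:ℝ)| ^ p = 1 := by rw [abs_neg, abs_one, Real.one_rpow]
    rw [h1, h2]
    ring
  calc gcost p θ ≤ ∫ z : ℝ × ℝ, |z.1 - z.2| ^ p ∂π := gcost_le p θ hp π hfst hsnd
  _ = 1 := hcost

/-- For `p > 1`, the function `g(θ) = W_p^p(ρ(·,θ), ρ*)` is not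
differentiable at `θ = 0`: the right lower derivative is at least `2^p + p − 1`
while the left upper derivative is at most `p + 1`, and `2^p + p − 1 > p + 1`. -/
theorem stmt17 (p : ℝ) (hp : 1 < p) :
    (2 : ℝ) ^ p + p - 1 ≤
        liminf (fun θ : ℝ => (gcost p θ - gcost p 0) / θ) (nhdsWithin 0 (Ioi 0)) ∧
    limsup (fun θ : ℝ => (gcost p θ - gcost p 0) / θ) (nhdsWithin 0 (Iio 0)) ≤ p + 1 ∧
    p + 1 < (2 : ℝ) ^ p + p - 1 ∧
    ¬DifferentiableAt ℝ (gcost p) 0 := by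
  have hp0 : (0:ℝ) < p := by linarith
  have h2p : (2:ℝ) < 2 ^ p := by
    have := Real.rpow_lt_rpow_of_exponent_lt (by norm_num : (1:ℝ) < 2) hp
    rwa [Real.rpow_one] at this
  have hδu : (1:ℝ) - p ≤ (2:ℝ) ^ p - p - 1 := by linarith
  -- dual lower bounds
  have dualP : ∀ θ : ℝ, -(1/2) ≤ θ → θ ≤ 1/2 →
      1 + ((2:ℝ) ^ p + p - 1) * θ ≤ gcost p θ := by
    intro θ h1 h2
    have := dual_lb hp hδu le_rfl h1 h2
    have e : 2 * p + ((2:ℝ) ^ p - p - 1) = (2:ℝ) ^ p + p - 1 := by ring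
    rwa [e] at this
  have dualM : ∀ θ : ℝ, -(1/2) ≤ θ → θ ≤ 1/2 → 1 + (p + 1) * θ ≤ gcost p θ := by
    intro θ h1 h2
    have := dual_lb hp le_rfl hδu h1 h2
    have e : 2 * p + (1 - p) = p + 1 := by ring
    rwa [e] at this
  have hg0_le : gcost p 0 ≤ 1 := gcost_zero_le p hp0.le
  have hg0_ge : (1:ℝ) ≤ gcost p 0 := by
    have := dualM 0 (by norm_num) (by norm_num)
    simpa using this
  set u : ℝ → ℝ := fun θ => (gcost p θ - gcost p 0) / θ with hu
  -- eventual bounds on the right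
  have hevP : ∀ᶠ θ in nhdsWithin (0:ℝ) (Ioi 0),
      ((2:ℝ) ^ p + p - 1 ≤ u θ ∧ u θ ≤ (3:ℝ) ^ p - 1) := by
    filter_upwards [Ioo_mem_nhdsGT_of_mem
      (⟨le_refl (0:ℝ), by norm_num⟩ : (0:ℝ) ∈ Ico (0:ℝ) (1/2))] with θ hθ
    obtain ⟨hθ0, hθh⟩ := hθ
    constructor
    · rw [hu, le_div_iff₀ hθ0]
      have := dualP θ (by linarith) hθh.le
      linarith
    · rw [hu, div_le_iff₀ hθ0]
      have := gcost_pos_le hp0.le hθ0.le hθh.le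
      linarith
  have hevM : ∀ᶠ θ in nhdsWithin (0:ℝ) (Iio 0),
      (u θ ≤ p + 1 ∧ 0 ≤ u θ) := by
    filter_upwards [Ioo_mem_nhdsLT_of_mem
      (⟨by norm_num, le_refl (0:ℝ)⟩ : (0:ℝ) ∈ Ioc (-(1/2) : ℝ) 0)] with θ hθ
    obtain ⟨hθl, hθ0⟩ := hθ
    constructor
    · rw [hu, div_le_iff_of_neg hθ0]
      have := dualM θ hθl.le (by linarith)
      linarith
    · have h1 : gcost p θ - gcost p 0 ≤ 0 := by
        have := gcost_neg_le hp0.le hθl.le hθ0.le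
        linarith
      have h2 : u θ = (-(gcost p θ - gcost p 0)) / (-θ) := by
        rw [neg_div_neg_eq]
      rw [h2]
      exact div_nonneg (by linarith) (by linarith)
  have hBoundP : IsBoundedUnder (· ≤ ·) (nhdsWithin (0:ℝ) (Ioi 0)) u :=
    ⟨(3:ℝ) ^ p - 1, eventually_map.mpr (hevP.mono fun θ h => h.2)⟩
  have hBoundM : IsBoundedUnder (· ≥ ·) (nhdsWithin (0:ℝ) (Iio 0)) u :=
    ⟨0, eventually_map.mpr (hevM.mono fun θ h => h.2)⟩
  have part1 : (2:ℝ) ^ p + p - 1 ≤ liminf u (nhdsWithin 0 (Ioi 0)) :=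
    le_liminf_of_le hBoundP.isCoboundedUnder_ge (hevP.mono fun θ h => h.1)
  have part2 : limsup u (nhdsWithin 0 (Iio 0)) ≤ p + 1 :=
    limsup_le_of_le hBoundM.isCoboundedUnder_le (hevM.mono fun θ h => h.1)
  refine ⟨part1, part2, by linarith, ?_⟩
  intro hdiff
  have hd := hdiff.hasDerivAt
  rw [hasDerivAt_iff_tendsto_slope] at hd
  have hslope : ∀ θ : ℝ, slope (gcost p) 0 θ = u θ := by
    intro θ
    rw [slope_def_field, hu, sub_zero]
  have hteq : Tendsto u (nhdsWithin (0:ℝ) {0}ᶜ) (nhds (deriv (gcost p) 0)) := by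
    refine hd.congr fun θ => hslope θ
  have htP : Tendsto u (nhdsWithin (0:ℝ) (Ioi 0)) (nhds (deriv (gcost p) 0)) :=
    hteq.mono_left (nhdsWithin_mono 0 fun x hx => ne_of_gt hx)
  have htM : Tendsto u (nhdsWithin (0:ℝ) (Iio 0)) (nhds (deriv (gcost p) 0)) :=
    hteq.mono_left (nhdsWithin_mono 0 fun x hx => ne_of_lt hx)
  have e1 : liminf u (nhdsWithin (0:ℝ) (Ioi 0)) = deriv (gcost p) 0 := htP.liminf_eq
  have e2 : limsup u (nhdsWithin (0:ℝ) (Iio 0)) = deriv (gcost p) 0 := htM.limsup_eq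
  rw [e1] at part1
  rw [e2] at part2
  linarith
end
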